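/- arXiv:1006.4149 — 5 statements merged into one kernel-verified Lean document; each statement's English description precedes it below -/
import Mathlib

section
/- Let Φ be a finite list of nonzero elements of Λ and let Y ∈ V be polarizing for Φ. Then for every λ ∈ Λ, Σ_I (−1)^{|I|} · Θ[Φ↑Y](λ − Σ_{φ∈I} φ) equals 1 if λ = 0 and equals 0 otherwise, where I ranges over all sublists of the list Φ (so that the left-hand side is the convolution of Θ[Φ↑Y] with the Fourier coefficients of the finite product Π_{φ∈Φ}(1 − e_φ)). Equivalently, Θ[Φ↑Y] · Π_{φ∈Φ}(1 − e_φ) = 1 as formal characters. -/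
noncomputable section

open Module
open scoped Classical

variable {V : Type*} [NormedAddCommGroup V] [InnerProductSpace ℝ V] [FiniteDimensional ℝ V]

/-- A full-rank lattice: a free `ℤ`-submodule of rank `dim V` that spans `V` over `ℝ`. -/
def IsLattice (Λ : Submodule ℤ V) : Prop :=
  Submodule.span ℝ (Λ : Set V) = ⊤ ∧ Nonempty (Basis (Fin (finrank ℝ V)) ℤ Λ)

/-- Filter a list by a (classical) predicate. -/
def filterP (Φ : List V) (P : V → Prop) : List V :=
  Φ.filter fun v => @decide (P v) (Classical.propDecidable _)

/-- A vector `Y` is polarizing for the list `Φ` if `(φ, Y) ≠ 0` for every entry `φ`. -/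
def Polarizing (Φ : List V) (Y : V) : Prop := ∀ φ ∈ Φ, (inner ℝ φ Y : ℝ) ≠ 0

/-- The partition function `Θ[Φ↑Y] : V → ℤ`. -/
def theta (Φ : List V) (Y : V) (lam : V) : ℤ :=
  (-1 : ℤ) ^ (filterP Φ (fun φ => (inner ℝ φ Y : ℝ) < 0)).length *
    (Set.ncard {n : Fin Φ.length → ℕ |
      ∑ i : Fin Φ.length,
        (if (0 : ℝ) < (inner ℝ (Φ.get i) Y : ℝ) then ((n i : ℤ) • Φ.get i)
         else (-(((n i : ℤ) + 1) • Φ.get i))) = lam} : ℤ)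

/-- Polynomial functions on a real vector space, with values in `ℂ`:
the subalgebra of functions generated by (complexified) real linear functionals. -/
def IsPolyFun {W : Type*} [AddCommGroup W] [Module ℝ W] (p : W → ℂ) : Prop :=
  p ∈ Algebra.adjoin ℂ {g : W → ℂ | ∃ l : W →ₗ[ℝ] ℝ, g = fun w => ((l w : ℝ) : ℂ)}

/-- A function is quasi-polynomial on the lattice `Ξ` if there is a finite-index
sublattice `Ξ₀` such that on every coset `ξ + Ξ₀` of a lattice point `ξ ∈ Ξ`, the function
agrees with a polynomial function. -/
def IsQuasiPoly {W : Type*} [AddCommGroup W] [Module ℝ W] (Ξ : Submodule ℤ W) (f : W → ℂ) :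
    Prop :=
  ∃ Ξ₀ : Submodule ℤ W, Ξ₀ ≤ Ξ ∧ (∃ N : ℕ, 0 < N ∧ ∀ v ∈ Ξ, (N : ℤ) • v ∈ Ξ₀) ∧
    ∀ ξ ∈ Ξ, ∃ p : W → ℂ, IsPolyFun p ∧ ∀ μ ∈ Ξ₀, f (ξ + μ) = p (ξ + μ)

/-- `γ` is `Φ`-regular: it lies in the span of `Φ` and is not a linear combination of fewer
than `dim span Φ` elements of `Φ`. -/
def PhiRegular (Φ : List V) (γ : V) : Prop :=
  γ ∈ Submodule.span ℝ {v | v ∈ Φ} ∧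
    ¬∃ s : Finset V, ↑s ⊆ {v | v ∈ Φ} ∧
      s.card < finrank ℝ (Submodule.span ℝ {v | v ∈ Φ}) ∧ γ ∈ Submodule.span ℝ (s : Set V)

/-- A `Φ`-tope: a connected component of the set of `Φ`-regular elements. -/
def IsTope (Φ : List V) (T : Set V) : Prop :=
  ∃ γ, PhiRegular Φ γ ∧ T = connectedComponentIn {x | PhiRegular Φ x} γ

/-- An alcove for the data `(μ_p, Φ_p)`: a connected component of the set of `γ` such that
`γ - μ p` is `Φ p`-regular for all `p`. -/
def IsAlcove {F : Type*} (μ : F → V) (Φ : F → List V) (A : Set V) : Prop :=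
  ∃ γ, (∀ p, PhiRegular (Φ p) (γ - μ p)) ∧
    A = connectedComponentIn {x | ∀ p, PhiRegular (Φ p) (x - μ p)} γ

namespace ThetaProofAux

open Finset

variable {V : Type*} [NormedAddCommGroup V] [InnerProductSpace ℝ V] [FiniteDimensional ℝ V]

/-- The summand appearing in the definition of `theta`. -/
noncomputable def term (Y v : V) (m : ℕ) : V :=
  if (0 : ℝ) < (inner ℝ v Y : ℝ) then ((m : ℤ) • v) else (-(((m : ℤ) + 1) • v))

/-- The set of solutions counted by `theta`. -/
def Sset (Y : V) (Φ : List V) (lam : V) : Set (Fin Φ.length → ℕ) :=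
  {n | ∑ i : Fin Φ.length, term Y (Φ.get i) (n i) = lam}

lemma theta_eq (Φ : List V) (Y lam : V) :
    theta Φ Y lam =
      (-1 : ℤ) ^ (filterP Φ (fun φ => (inner ℝ φ Y : ℝ) < 0)).length *
        ((Sset Y Φ lam).ncard : ℤ) := rfl

lemma inner_term_le (Y v : V) (hv : (inner ℝ v Y : ℝ) ≠ 0) (m : ℕ) :
    (m : ℝ) * |(inner ℝ v Y : ℝ)| ≤ (inner ℝ (term Y v m) Y : ℝ) := by
  unfold term
  split_ifs with h
  · rw [← Int.cast_smul_eq_zsmul ℝ, real_inner_smul_left]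
    rw [abs_of_pos h]
    push_cast
    exact le_rfl
  · have hneg : (inner ℝ v Y : ℝ) < 0 := lt_of_le_of_ne (not_lt.1 h) hv
    rw [inner_neg_left, ← Int.cast_smul_eq_zsmul ℝ, real_inner_smul_left]
    rw [abs_of_neg hneg]
    push_cast
    nlinarith [hneg]

lemma inner_term_nonneg (Y v : V) (hv : (inner ℝ v Y : ℝ) ≠ 0) (m : ℕ) :
    (0 : ℝ) ≤ (inner ℝ (term Y v m) Y : ℝ) :=
  le_trans (by positivity) (inner_term_le Y v hv m)

lemma Sset_finite (Y : V) (Φ : List V) (hY : Polarizing Φ Y) (lam : V) :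
    (Sset Y Φ lam).Finite := by
  classical
  set R := (inner ℝ lam Y : ℝ) with hR
  have hmem : ∀ i : Fin Φ.length, (inner ℝ (Φ.get i) Y : ℝ) ≠ 0 := fun i =>
    hY _ (Φ.get_mem _)
  have key : ∀ n ∈ Sset Y Φ lam, ∀ i : Fin Φ.length,
      (n i : ℝ) * |(inner ℝ (Φ.get i) Y : ℝ)| ≤ R := by
    intro n hn i
    have hsum : ∑ j : Fin Φ.length, (inner ℝ (term Y (Φ.get j) (n j)) Y : ℝ) = R := by
      rw [← sum_inner]
      exact congrArg (fun w => (inner ℝ w Y : ℝ)) hn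
    calc (n i : ℝ) * |(inner ℝ (Φ.get i) Y : ℝ)|
        ≤ (inner ℝ (term Y (Φ.get i) (n i)) Y : ℝ) := inner_term_le Y _ (hmem i) _
      _ ≤ ∑ j : Fin Φ.length, (inner ℝ (term Y (Φ.get j) (n j)) Y : ℝ) :=
          Finset.single_le_sum (fun j _ => inner_term_nonneg Y _ (hmem j) _) (mem_univ i)
      _ = R := hsum
  apply Set.Finite.subset
    (Set.Finite.pi (fun i : Fin Φ.length =>
      Set.finite_Iic (⌈R / |(inner ℝ (Φ.get i) Y : ℝ)|⌉₊)))
  intro n hn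
  intro i _
  have hc : 0 < |(inner ℝ (Φ.get i) Y : ℝ)| := abs_pos.2 (hmem i)
  have h1 : (n i : ℝ) ≤ R / |(inner ℝ (Φ.get i) Y : ℝ)| :=
    (le_div_iff₀ hc).2 (key n hn i)
  have : n i ≤ ⌈R / |(inner ℝ (Φ.get i) Y : ℝ)|⌉₊ := by
    calc n i = ⌈(n i : ℝ)⌉₊ := by simp
      _ ≤ _ := Nat.ceil_le_ceil h1
  exact this

end ThetaProofAux

namespace ThetaProofAux

variable {V : Type*} [NormedAddCommGroup V] [InnerProductSpace ℝ V] [FiniteDimensional ℝ V]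

/-- The solution set for a cons list, in a type-convenient form. -/
def Scons (Y φ : V) (Φ' : List V) (μ : V) : Set (Fin (Φ'.length + 1) → ℕ) :=
  {n | term Y φ (n 0) + ∑ j : Fin Φ'.length, term Y (Φ'.get j) (n j.succ) = μ}

lemma Sset_cons (Y φ : V) (Φ' : List V) (μ : V) :
    Sset Y (φ :: Φ') μ = Scons Y φ Φ' μ := by
  ext n
  show (∑ i : Fin (Φ'.length + 1), term Y ((φ :: Φ').get i) (n i) = μ) ↔ _
  rw [Fin.sum_univ_succ]
  exact Iff.rfl

lemma ncard_zero_part (Y φ : V) (Φ' : List V) (μ : V) :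
    {n ∈ Scons Y φ Φ' μ | n 0 = 0}.ncard = (Sset Y Φ' (μ - term Y φ 0)).ncard := by
  classical
  have hinj : Set.InjOn (fun (n : Fin (Φ'.length + 1) → ℕ) (j : Fin Φ'.length) => n j.succ)
      {n ∈ Scons Y φ Φ' μ | n 0 = 0} := by
    intro n hn m hm h
    funext i
    refine Fin.cases ?_ ?_ i
    · rw [hn.2, hm.2]
    · intro j; exact congrFun h j
  have himg : (fun (n : Fin (Φ'.length + 1) → ℕ) (j : Fin Φ'.length) => n j.succ) ''
      {n ∈ Scons Y φ Φ' μ | n 0 = 0} = Sset Y Φ' (μ - term Y φ 0) := by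
    ext n'
    constructor
    · rintro ⟨n, ⟨hn, h0⟩, rfl⟩
      simp only [Scons, Set.mem_setOf_eq] at hn
      rw [h0] at hn
      exact eq_sub_of_add_eq' hn
    · intro hn'
      simp only [Sset, Set.mem_setOf_eq] at hn'
      refine ⟨Fin.cons 0 n', ⟨?_, ?_⟩, ?_⟩
      · simp only [Scons, Set.mem_setOf_eq, Fin.cons_zero, Fin.cons_succ]
        rw [hn']
        abel
      · simp
      · funext j; simp [Fin.cons_succ]
  rw [← himg, Set.ncard_image_of_injOn hinj]

lemma term_succ (Y φ : V) (m : ℕ) :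
    term Y φ (m + 1) = (if (0 : ℝ) < (inner ℝ φ Y : ℝ) then φ else -φ) + term Y φ m := by
  unfold term
  split_ifs with h
  · push_cast
    rw [add_smul, one_smul, add_comm]
  · push_cast
    rw [add_smul, add_smul, one_smul]
    abel

lemma ncard_succ_part (Y φ : V) (Φ' : List V) (μ : V) :
    {n ∈ Scons Y φ Φ' (μ + (if (0 : ℝ) < (inner ℝ φ Y : ℝ) then φ else -φ)) | n 0 ≠ 0}.ncard
      = (Scons Y φ Φ' μ).ncard := by
  classical
  set d : V := if (0 : ℝ) < (inner ℝ φ Y : ℝ) then φ else -φ with hd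
  set shift : (Fin (Φ'.length + 1) → ℕ) → (Fin (Φ'.length + 1) → ℕ) :=
    fun n => Function.update n 0 (n 0 + 1) with hshift
  have hshift0 : ∀ n, shift n 0 = n 0 + 1 := fun n => Function.update_self _ _ _
  have hshifts : ∀ (n : Fin (Φ'.length + 1) → ℕ) (j : Fin Φ'.length),
      shift n j.succ = n j.succ := fun n j =>
    Function.update_of_ne (Fin.succ_ne_zero j) _ _
  have hT : ∀ n : Fin (Φ'.length + 1) → ℕ,
      term Y φ (shift n 0) + ∑ j : Fin Φ'.length, term Y (Φ'.get j) (shift n j.succ)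
        = d + (term Y φ (n 0) + ∑ j : Fin Φ'.length, term Y (Φ'.get j) (n j.succ)) := by
    intro n
    rw [hshift0]
    have : ∀ j : Fin Φ'.length, term Y (Φ'.get j) (shift n j.succ)
        = term Y (Φ'.get j) (n j.succ) := fun j => by rw [hshifts]
    rw [Finset.sum_congr rfl (fun j _ => this j), term_succ]
    abel
  have hinj : Function.Injective shift := by
    intro n m h
    funext i
    refine Fin.cases ?_ ?_ i
    · have := congrFun h 0
      rw [hshift0, hshift0] at this
      omega
    · intro j
      have := congrFun h j.succ
      rwa [hshifts, hshifts] at this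
  have himg : shift '' Scons Y φ Φ' μ
      = {n ∈ Scons Y φ Φ' (μ + d) | n 0 ≠ 0} := by
    ext n
    constructor
    · rintro ⟨m, hm, rfl⟩
      simp only [Scons, Set.mem_setOf_eq] at hm ⊢
      refine ⟨by rw [hT, hm, add_comm], ?_⟩
      rw [hshift0]; omega
    · rintro ⟨hn, h0⟩
      simp only [Scons, Set.mem_setOf_eq] at hn
      refine ⟨Function.update n 0 (n 0 - 1), ?_, ?_⟩
      · simp only [Scons, Set.mem_setOf_eq]
        have hs : shift (Function.update n 0 (n 0 - 1)) = n := by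
          funext i
          refine Fin.cases ?_ (fun j => ?_) i
          · rw [hshift0, Function.update_self]
            omega
          · rw [hshifts, Function.update_of_ne (Fin.succ_ne_zero j)]
        have h3 := hT (Function.update n 0 (n 0 - 1))
        rw [hs, hn, add_comm μ d] at h3
        exact (add_left_cancel h3).symm
      · funext i
        refine Fin.cases ?_ (fun j => ?_) i
        · rw [hshift0, Function.update_self]; omega
        · rw [hshifts, Function.update_of_ne (Fin.succ_ne_zero j)]
  rw [← himg, Set.ncard_image_of_injective _ hinj]

end ThetaProofAux

namespace ThetaProofAux

variable {V : Type*} [NormedAddCommGroup V] [InnerProductSpace ℝ V] [FiniteDimensional ℝ V]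

lemma ncard_split (Y φ : V) (Φ' : List V) (hY : Polarizing (φ :: Φ') Y) (μ : V) :
    (Scons Y φ Φ' (μ + (if (0 : ℝ) < (inner ℝ φ Y : ℝ) then φ else -φ))).ncard
      = (Sset Y Φ' (μ + (if (0 : ℝ) < (inner ℝ φ Y : ℝ) then φ else -φ) - term Y φ 0)).ncard
        + (Scons Y φ Φ' μ).ncard := by
  classical
  set d : V := if (0 : ℝ) < (inner ℝ φ Y : ℝ) then φ else -φ with hd
  have hfin : (Scons Y φ Φ' (μ + d)).Finite := by
    rw [← Sset_cons]
    exact Sset_finite Y (φ :: Φ') hY (μ + d)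
  have hsplit : Scons Y φ Φ' (μ + d)
      = {n ∈ Scons Y φ Φ' (μ + d) | n 0 = 0} ∪ {n ∈ Scons Y φ Φ' (μ + d) | n 0 ≠ 0} := by
    ext n
    by_cases h : n 0 = 0 <;> simp [h]
  have hdisj : Disjoint {n ∈ Scons Y φ Φ' (μ + d) | n 0 = 0}
      {n ∈ Scons Y φ Φ' (μ + d) | n 0 ≠ 0} := by
    rw [Set.disjoint_left]
    rintro n ⟨_, h0⟩ ⟨_, h0'⟩
    exact h0' h0
  rw [hsplit, Set.ncard_union_eq hdisj
      (hfin.subset (fun n hn => hn.1)) (hfin.subset (fun n hn => hn.1)),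
    ncard_zero_part, ncard_succ_part]

lemma theta_cons (Y φ : V) (Φ' : List V) (hY : Polarizing (φ :: Φ') Y) (lam : V) :
    theta (φ :: Φ') Y lam - theta (φ :: Φ') Y (lam - φ) = theta Φ' Y lam := by
  classical
  have hφ : (inner ℝ φ Y : ℝ) ≠ 0 := hY φ List.mem_cons_self
  rcases hφ.lt_or_gt with hneg | hpos
  · have hnp : ¬ (0 : ℝ) < (inner ℝ φ Y : ℝ) := not_lt.2 hneg.le
    have ht0 : term Y φ 0 = -φ := by
      unfold term; rw [if_neg hnp]; simp
    have hcount := ncard_split Y φ Φ' hY lam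
    rw [if_neg hnp, ht0] at hcount
    rw [show lam + -φ = lam - φ by abel, show lam - φ - -φ = lam by abel] at hcount
    have hsign : (filterP (φ :: Φ') (fun v => (inner ℝ v Y : ℝ) < 0)).length
        = (filterP Φ' (fun v => (inner ℝ v Y : ℝ) < 0)).length + 1 := by
      unfold filterP
      rw [List.filter_cons]
      simp [hneg]
    rw [theta_eq, theta_eq, theta_eq, Sset_cons, Sset_cons, hsign, hcount]
    push_cast
    ring
  · have ht0 : term Y φ 0 = 0 := by
      unfold term; rw [if_pos hpos]; simp
    have hcount := ncard_split Y φ Φ' hY (lam - φ)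
    rw [if_pos hpos, ht0] at hcount
    rw [show lam - φ + φ = lam by abel, sub_zero] at hcount
    have hsign : (filterP (φ :: Φ') (fun v => (inner ℝ v Y : ℝ) < 0)).length
        = (filterP Φ' (fun v => (inner ℝ v Y : ℝ) < 0)).length := by
      unfold filterP
      rw [List.filter_cons]
      simp [asymm hpos]
    rw [theta_eq, theta_eq, theta_eq, Sset_cons, Sset_cons, hsign, hcount]
    push_cast
    ring

end ThetaProofAux

namespace ThetaProofAux

lemma map_preimage_eq {n : ℕ} (I : Finset (Fin (n + 1))) (h0 : (0 : Fin (n + 1)) ∉ I) :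
    (I.preimage Fin.succ ((Fin.succ_injective n).injOn)).map (Fin.succEmb n) = I := by
  ext i
  simp only [Finset.mem_map, Finset.mem_preimage, Fin.succEmb, Function.Embedding.coeFn_mk]
  constructor
  · rintro ⟨j, hj, rfl⟩; exact hj
  · intro hi
    have hne : i ≠ 0 := fun h => h0 (h ▸ hi)
    obtain ⟨j, rfl⟩ := Fin.exists_succ_eq.2 hne
    exact ⟨j, hi, rfl⟩

lemma preimage_map_eq {n : ℕ} (J : Finset (Fin n)) :
    (J.map (Fin.succEmb n)).preimage Fin.succ ((Fin.succ_injective n).injOn) = J := by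
  ext j
  simp [Fin.succEmb, Fin.succ_injective n |>.eq_iff]

lemma zero_not_mem_map {n : ℕ} (J : Finset (Fin n)) :
    (0 : Fin (n + 1)) ∉ J.map (Fin.succEmb n) := by
  simp only [Finset.mem_map, Fin.succEmb, Function.Embedding.coeFn_mk]
  rintro ⟨j, -, hj⟩
  exact Fin.succ_ne_zero j hj

lemma sum_finset_fin_succ {M : Type*} [AddCommMonoid M] {n : ℕ} (f : Finset (Fin (n + 1)) → M) :
    ∑ I : Finset (Fin (n + 1)), f I
      = ∑ J : Finset (Fin n), f (J.map (Fin.succEmb n))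
        + ∑ J : Finset (Fin n), f (insert 0 (J.map (Fin.succEmb n))) := by
  classical
  rw [← Finset.sum_filter_add_sum_filter_not Finset.univ (fun I => (0 : Fin (n + 1)) ∉ I) f]
  congr 1
  · refine (Finset.sum_nbij' (fun I => I.preimage Fin.succ ((Fin.succ_injective n).injOn))
      (fun J => J.map (Fin.succEmb n)) ?_ ?_ ?_ ?_ ?_)
    · intro I _; exact Finset.mem_univ _
    · intro J _
      simp only [Finset.mem_filter]
      exact ⟨Finset.mem_univ _, zero_not_mem_map J⟩
    · intro I hI
      simp only [Finset.mem_filter] at hI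
      exact map_preimage_eq I hI.2
    · intro J _; exact preimage_map_eq J
    · intro I hI
      simp only [Finset.mem_filter] at hI
      rw [map_preimage_eq I hI.2]
  · refine (Finset.sum_nbij' (fun I => I.preimage Fin.succ ((Fin.succ_injective n).injOn))
      (fun J => insert 0 (J.map (Fin.succEmb n))) ?_ ?_ ?_ ?_ ?_)
    · intro I _; exact Finset.mem_univ _
    · intro J _
      simp only [Finset.mem_filter, not_not]
      exact ⟨Finset.mem_univ _, Finset.mem_insert_self _ _⟩
    · intro I hI
      simp only [Finset.mem_filter, not_not] at hI
      have : I.preimage Fin.succ ((Fin.succ_injective n).injOn)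
          = (I.erase 0).preimage Fin.succ ((Fin.succ_injective n).injOn) := by
        ext j
        simp [Finset.mem_preimage, Finset.mem_erase, Fin.succ_ne_zero j]
      rw [this, map_preimage_eq (I.erase 0) (Finset.notMem_erase _ _),
        Finset.insert_erase hI.2]
    · intro J _
      have : insert (0 : Fin (n+1)) (J.map (Fin.succEmb n)) =
          (insert (0 : Fin (n+1)) (J.map (Fin.succEmb n))) := rfl
      ext j
      simp only [Finset.mem_preimage, Finset.mem_insert]
      constructor
      · rintro (h | h)
        · exact absurd h (Fin.succ_ne_zero j)
        · have := zero_not_mem_map J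
          simp only [Finset.mem_map, Fin.succEmb, Function.Embedding.coeFn_mk] at h
          obtain ⟨j', hj', hjj⟩ := h
          rwa [← Fin.succ_injective n hjj]
      · intro hj
        right
        simp only [Finset.mem_map, Fin.succEmb, Function.Embedding.coeFn_mk]
        exact ⟨j, hj, rfl⟩
    · intro I hI
      simp only [Finset.mem_filter, not_not] at hI
      have h1 : I.preimage Fin.succ ((Fin.succ_injective n).injOn)
          = (I.erase 0).preimage Fin.succ ((Fin.succ_injective n).injOn) := by
        ext j
        simp [Finset.mem_preimage, Finset.mem_erase, Fin.succ_ne_zero j]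
      rw [h1, map_preimage_eq (I.erase 0) (Finset.notMem_erase _ _),
        Finset.insert_erase hI.2]

end ThetaProofAux


/-- `Θ[Φ↑Y] · Π_{φ∈Φ}(1 - e_φ) = 1` as formal characters: the convolution of the partition
function with the Fourier coefficients of `Π(1 - e_φ)` is the delta function at `0`. -/
theorem theta_mul_prod_one_sub
    (Λ : Submodule ℤ V) (hΛ : IsLattice Λ)
    (Φ : List V) (hΦ0 : ∀ φ ∈ Φ, φ ≠ 0) (hΦΛ : ∀ φ ∈ Φ, φ ∈ Λ)
    (Y : V) (hY : Polarizing Φ Y) :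
    ∀ lam ∈ Λ,
      (∑ I : Finset (Fin Φ.length),
          (-1 : ℤ) ^ I.card * theta Φ Y (lam - ∑ i ∈ I, Φ.get i)) =
        if lam = 0 then 1 else 0 := by
  intro lam _
  clear hΦ0 hΦΛ hΛ
  induction Φ with
  | nil =>
    have huniv : (Finset.univ : Finset (Finset (Fin (List.nil : List V).length))) = {∅} := by
      apply Finset.eq_singleton_iff_unique_mem.mpr
      refine ⟨Finset.mem_univ _, fun I _ => ?_⟩
      exact Finset.eq_empty_of_forall_notMem (fun x _ => x.elim0)
    rw [huniv, Finset.sum_singleton, Finset.card_empty, Finset.sum_empty, sub_zero, pow_zero,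
      one_mul, ThetaProofAux.theta_eq]
    simp only [filterP, List.filter_nil, List.length_nil, pow_zero, one_mul]
    by_cases h : lam = 0
    · subst h
      rw [if_pos rfl]
      have : ThetaProofAux.Sset Y (List.nil : List V) 0 = Set.univ := by
        ext n
        simp [ThetaProofAux.Sset]
      rw [this, Set.ncard_univ, Nat.card_unique]; norm_num
    · rw [if_neg h]
      have : ThetaProofAux.Sset Y (List.nil : List V) lam = ∅ := by
        ext n
        simp [ThetaProofAux.Sset, Ne.symm h]
      rw [this, Set.ncard_empty]
      rfl
  | cons φ Φ' ih =>
    have hY' : Polarizing Φ' Y := fun v hv => hY v (List.mem_cons_of_mem _ hv)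
    have hgoal :
        (∑ I : Finset (Fin (Φ'.length + 1)),
            (-1 : ℤ) ^ I.card * theta (φ :: Φ') Y (lam - ∑ i ∈ I, (φ :: Φ').get i)) =
          if lam = 0 then 1 else 0 := by
      rw [ThetaProofAux.sum_finset_fin_succ
        (fun I => (-1 : ℤ) ^ I.card * theta (φ :: Φ') Y (lam - ∑ i ∈ I, (φ :: Φ').get i))]
      rw [← Finset.sum_add_distrib]
      rw [← ih hY']
      apply Finset.sum_congr rfl
      intro J _
      have h0 := ThetaProofAux.zero_not_mem_map J
      have hc : (J.map (Fin.succEmb Φ'.length)).card = J.card := Finset.card_map _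
      have hs : ∑ i ∈ J.map (Fin.succEmb Φ'.length), (φ :: Φ').get i = ∑ j ∈ J, Φ'.get j := by
        rw [Finset.sum_map]
        rfl
      have hins : ∑ i ∈ insert 0 (J.map (Fin.succEmb Φ'.length)), (φ :: Φ').get i
          = φ + ∑ j ∈ J, Φ'.get j := by
        rw [Finset.sum_insert h0, hs]
        rfl
      rw [hc, Finset.card_insert_of_notMem h0, hc, hs, hins,
        show lam - (φ + ∑ j ∈ J, Φ'.get j) = lam - ∑ j ∈ J, Φ'.get j - φ by abel,
        pow_succ]
      have hrec := ThetaProofAux.theta_cons Y φ Φ' hY (lam - ∑ j ∈ J, Φ'.get j)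
      linear_combination ((-1 : ℤ) ^ J.card) * hrec
    exact hgoal

end
end

section
/- Let Φ be a finite list of nonzero elements of Λ and let Y ∈ V be polarizing for Φ. Then there is an ε > 0 such that for all X, W ∈ V with ‖W − Y‖ < ε, the series Σ_{λ∈Λ} Θ[Φ↑Y](λ) · e^{i(λ,X) − (λ,W)} converges absolutely (i.e. Σ_{λ∈Λ} |Θ[Φ↑Y](λ)| e^{−(λ,W)} < ∞), and its sum equals Π_{φ∈Φ} (1 − e^{i(φ,X) − (φ,W)})^{−1}. -/
noncomputable section

open Module

variable {V : Type*} [NormedAddCommGroup V] [InnerProductSpace ℝ V] [FiniteDimensional ℝ V]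

/-! ### Auxiliary lemmas -/

lemma geom_neg_aux (z : ℂ) (hz0 : z ≠ 0) (hz : ‖z⁻¹‖ < 1) (hz1 : z ≠ 1) :
    ∑' m : ℕ, -(z⁻¹ ^ (m + 1)) = (1 - z)⁻¹ := by
  have h1 : z⁻¹ ≠ 1 := by
    intro h; rw [h] at hz; simp at hz
  have h2 : (1 : ℂ) - z⁻¹ ≠ 0 := sub_ne_zero.2 (Ne.symm h1)
  have h3 : (1 : ℂ) - z ≠ 0 := sub_ne_zero.2 (Ne.symm hz1)
  have : (fun m : ℕ => -(z⁻¹ ^ (m + 1))) = fun m : ℕ => -z⁻¹ * z⁻¹ ^ m := by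
    funext m; ring
  rw [this, tsum_mul_left, tsum_geometric_of_norm_lt_one hz]
  have e1 : -z⁻¹ * (1 - z⁻¹)⁻¹ = (-(z * (1 - z⁻¹)))⁻¹ := by
    rw [inv_neg, mul_inv]; ring
  have e2 : -(z * (1 - z⁻¹)) = 1 - z := by
    rw [mul_sub, mul_inv_cancel₀ hz0]; ring
  rw [e1, e2]

lemma aux_pi : ∀ {k : ℕ} (c : Fin k → ℕ → ℂ), (∀ i, Summable fun m => ‖c i m‖) →
    Summable (fun n : Fin k → ℕ => ‖∏ i, c i (n i)‖) ∧
    ∑' n : Fin k → ℕ, ∏ i, c i (n i) = ∏ i, ∑' m, c i m := by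
  intro k
  induction k with
  | zero =>
    intro c _
    haveI : Unique (Fin 0 → ℕ) := ⟨⟨fun i => i.elim0⟩, fun f => funext fun i => i.elim0⟩
    constructor
    · exact .of_finite
    · rw [tsum_eq_single (default : Fin 0 → ℕ)
        (fun b hb => absurd (Subsingleton.elim b default) hb)]
      simp
  | succ k ih =>
    intro c h
    obtain ⟨hs, ht⟩ := ih (fun i => c i.succ) (fun i => h i.succ)
    have hs' : Summable (fun n : Fin k → ℕ => ‖∏ i, c i.succ (n i)‖) := hs
    have ht' : ∑' n : Fin k → ℕ, ∏ i : Fin k, c i.succ (n i)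
        = ∏ i : Fin k, ∑' m, c i.succ m := ht
    have hmul := Summable.mul_norm (h 0) hs'
    have htm := tsum_mul_tsum_of_summable_norm (h 0) hs'
    let e : ℕ × (Fin k → ℕ) ≃ (Fin (k + 1) → ℕ) := Fin.consEquiv (fun _ => ℕ)
    have hcomp : ∀ p : ℕ × (Fin k → ℕ),
        (∏ i, c i (e p i)) = c 0 p.1 * ∏ i : Fin k, c i.succ (p.2 i) := by
      intro p
      rw [Fin.prod_univ_succ]
      simp [e, Fin.consEquiv]
    constructor
    · refine (Equiv.summable_iff e).mp (hmul.congr fun p => ?_)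
      show ‖c 0 p.1 * ∏ i : Fin k, c i.succ (p.2 i)‖ = ‖∏ i, c i (e p i)‖
      rw [hcomp]
    · calc ∑' n : Fin (k + 1) → ℕ, ∏ i, c i (n i)
          = ∑' p : ℕ × (Fin k → ℕ), ∏ i, c i (e p i) :=
            (Equiv.tsum_eq e fun n => ∏ i, c i (n i)).symm
        _ = ∑' p : ℕ × (Fin k → ℕ), c 0 p.1 * ∏ i : Fin k, c i.succ (p.2 i) :=
            tsum_congr fun p => hcomp p
        _ = (∑' m, c 0 m) * ∑' v : Fin k → ℕ, ∏ i : Fin k, c i.succ (v i) := htm.symm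
        _ = ∏ i, ∑' m, c i m := by rw [ht', Fin.prod_univ_succ]

lemma eps_lemma (Y : V) : ∀ (Φ : List V), (∀ φ ∈ Φ, (inner ℝ φ Y : ℝ) ≠ 0) →
    ∃ ε : ℝ, 0 < ε ∧ ∀ W : V, ‖W - Y‖ < ε → ∀ φ ∈ Φ,
      ((0 < (inner ℝ φ Y : ℝ) → 0 < (inner ℝ φ W : ℝ)) ∧
       ((inner ℝ φ Y : ℝ) < 0 → (inner ℝ φ W : ℝ) < 0)) := by
  intro Φ
  induction Φ with
  | nil => exact fun _ => ⟨1, one_pos, by simp⟩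
  | cons a Φ ih =>
    intro hY
    obtain ⟨ε₁, hε₁, h₁⟩ := ih fun φ hφ => hY φ (List.mem_cons_of_mem a hφ)
    have ha : (inner ℝ a Y : ℝ) ≠ 0 := hY a (List.mem_cons_self)
    have hd : 0 < |(inner ℝ a Y : ℝ)| := abs_pos.2 ha
    refine ⟨min ε₁ (|(inner ℝ a Y : ℝ)| / (‖a‖ + 1)),
      lt_min hε₁ (div_pos hd (by positivity)), ?_⟩
    intro W hW φ hφ
    rcases List.mem_cons.1 hφ with rfl | hφ
    · have h2 : ‖W - Y‖ < |(inner ℝ φ Y : ℝ)| / (‖φ‖ + 1) :=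
        lt_of_lt_of_le hW (min_le_right _ _)
      have h2' : ‖W - Y‖ * (‖φ‖ + 1) < |(inner ℝ φ Y : ℝ)| := by
        rwa [← lt_div_iff₀ (by positivity)]
      have key : |(inner ℝ φ W : ℝ) - (inner ℝ φ Y : ℝ)| < |(inner ℝ φ Y : ℝ)| := by
        rw [← inner_sub_right]
        calc |(inner ℝ φ (W - Y) : ℝ)| ≤ ‖φ‖ * ‖W - Y‖ := abs_real_inner_le_norm φ (W - Y)
          _ < |(inner ℝ φ Y : ℝ)| := by nlinarith [norm_nonneg φ, norm_nonneg (W - Y)]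
      obtain ⟨k1, k2⟩ := abs_lt.1 key
      constructor <;> intro h
      · rw [abs_of_pos h] at k1 k2; linarith
      · rw [abs_of_neg h] at k1 k2; linarith
    · exact h₁ W (lt_of_lt_of_le hW (min_le_left _ _)) φ hφ

lemma sign_lemma (Y : V) : ∀ (Φ : List V), (∀ φ ∈ Φ, (inner ℝ φ Y : ℝ) ≠ 0) →
    (∏ i : Fin Φ.length, (if (0 : ℝ) < (inner ℝ (Φ.get i) Y : ℝ) then (1 : ℂ) else -1)) =
      (-1 : ℂ) ^ (filterP Φ (fun φ => (inner ℝ φ Y : ℝ) < 0)).length := by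
  intro Φ
  induction Φ with
  | nil => intro _; simp [filterP]
  | cons a Φ ih =>
    intro hY
    have htail := ih fun φ hφ => hY φ (List.mem_cons_of_mem a hφ)
    have ha : (inner ℝ a Y : ℝ) ≠ 0 := hY a (List.mem_cons_self)
    simp only [List.length_cons]
    rw [Fin.prod_univ_succ]
    have hget0 : (a :: Φ).get (0 : Fin (Φ.length + 1)) = a := rfl
    have hgets : ∀ i : Fin Φ.length,
        (a :: Φ).get (i.succ : Fin (Φ.length + 1)) = Φ.get i := fun i => rfl
    by_cases h : (0 : ℝ) < (inner ℝ a Y : ℝ)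
    · have hneg : ¬ ((inner ℝ a Y : ℝ) < 0) := not_lt_of_gt h
      have hfil : filterP (a :: Φ) (fun φ => (inner ℝ φ Y : ℝ) < 0)
          = filterP Φ (fun φ => (inner ℝ φ Y : ℝ) < 0) := by
        simp only [filterP, List.filter_cons]
        simp [hneg]
      rw [hfil, hget0, if_pos h, one_mul, ← htail]
      exact Finset.prod_congr rfl fun i _ => by rw [hgets]
    · have hlt : (inner ℝ a Y : ℝ) < 0 := lt_of_le_of_ne (le_of_not_gt h) ha
      have hfil : filterP (a :: Φ) (fun φ => (inner ℝ φ Y : ℝ) < 0)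
          = a :: filterP Φ (fun φ => (inner ℝ φ Y : ℝ) < 0) := by
        simp only [filterP, List.filter_cons]
        simp [hlt]
      rw [hfil, hget0, if_neg h, List.length_cons, pow_succ]
      rw [show ((-1 : ℂ) ^ (filterP Φ fun φ => (inner ℝ φ Y : ℝ) < 0).length * -1)
          = -1 * (-1 : ℂ) ^ (filterP Φ fun φ => (inner ℝ φ Y : ℝ) < 0).length by ring, ← htail]
      exact congrArg _ (Finset.prod_congr rfl fun i _ => by rw [hgets])

lemma E_zsmul (v X W : V) (q : ℤ) :
    Complex.exp (Complex.I * ((inner ℝ (q • v) X : ℝ) : ℂ) - ((inner ℝ (q • v) W : ℝ) : ℂ))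
      = Complex.exp (Complex.I * ((inner ℝ v X : ℝ) : ℂ) - ((inner ℝ v W : ℝ) : ℂ)) ^ q := by
  rw [← Complex.exp_int_mul]
  congr 1
  rw [← Int.cast_smul_eq_zsmul ℝ, real_inner_smul_left, real_inner_smul_left]
  push_cast
  ring

lemma normE (v X W : V) :
    ‖Complex.exp (Complex.I * ((inner ℝ v X : ℝ) : ℂ) - ((inner ℝ v W : ℝ) : ℂ))‖
      = Real.exp (-(inner ℝ v W : ℝ)) := by
  rw [Complex.norm_exp]
  congr 1
  simp [Complex.sub_re, Complex.mul_re]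

set_option maxHeartbeats 1000000 in
/-- Near `exp(iY)`, the series of exponentials with coefficients `Θ[Φ↑Y]` converges
absolutely to `Π_{φ∈Φ}(1 - e^{i(φ,X)-(φ,W)})⁻¹`. -/
theorem theta_series_converges
    (Λ : Submodule ℤ V) (hΛ : IsLattice Λ)
    (Φ : List V) (hΦ0 : ∀ φ ∈ Φ, φ ≠ 0) (hΦΛ : ∀ φ ∈ Φ, φ ∈ Λ)
    (Y : V) (hY : Polarizing Φ Y) :
    ∃ ε : ℝ, 0 < ε ∧ ∀ X W : V, ‖W - Y‖ < ε →
      Summable (fun lam : Λ =>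
        (|theta Φ Y (lam : V)| : ℝ) * Real.exp (-(inner ℝ (lam : V) W : ℝ))) ∧
      (∑' lam : Λ, (theta Φ Y (lam : V) : ℂ) *
          Complex.exp (Complex.I * ((inner ℝ (lam : V) X : ℝ) : ℂ) -
            ((inner ℝ (lam : V) W : ℝ) : ℂ))) =
        (Φ.map (fun φ =>
          (1 - Complex.exp (Complex.I * ((inner ℝ φ X : ℝ) : ℂ) -
            ((inner ℝ φ W : ℝ) : ℂ)))⁻¹)).prod := by
  obtain ⟨ε, hε, hsign⟩ := eps_lemma Y Φ hY
  refine ⟨ε, hε, fun X W hW => ?_⟩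
  have hsgn := hsign W hW
  have hmem : ∀ i : Fin Φ.length, Φ.get i ∈ Φ := fun i => List.get_mem Φ i
  set z : Fin Φ.length → ℂ := fun i =>
    Complex.exp (Complex.I * ((inner ℝ (Φ.get i) X : ℝ) : ℂ) -
      ((inner ℝ (Φ.get i) W : ℝ) : ℂ)) with hz
  have hzi : ∀ i, z i = Complex.exp (Complex.I * ((inner ℝ (Φ.get i) X : ℝ) : ℂ) -
      ((inner ℝ (Φ.get i) W : ℝ) : ℂ)) := fun i => by rw [hz]
  have hz0 : ∀ i, z i ≠ 0 := fun i => by rw [hzi i]; exact Complex.exp_ne_zero _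
  have hznorm : ∀ i, ‖z i‖ = Real.exp (-(inner ℝ (Φ.get i) W : ℝ)) := fun i => by
    rw [hzi i]; exact normE _ _ _
  have hlt : ∀ i : Fin Φ.length, (0 : ℝ) < (inner ℝ (Φ.get i) Y : ℝ) → ‖z i‖ < 1 := by
    intro i h
    rw [hznorm i]
    exact Real.exp_lt_one_iff.mpr (neg_lt_zero.mpr ((hsgn _ (hmem i)).1 h))
  have hYneg : ∀ i : Fin Φ.length, ¬ ((0 : ℝ) < (inner ℝ (Φ.get i) Y : ℝ)) →
      (inner ℝ (Φ.get i) W : ℝ) < 0 := fun i h =>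
    (hsgn _ (hmem i)).2 (lt_of_le_of_ne (le_of_not_gt h) (hY _ (hmem i)))
  have hltinv : ∀ i, ¬ ((0 : ℝ) < (inner ℝ (Φ.get i) Y : ℝ)) → ‖(z i)⁻¹‖ < 1 := by
    intro i h
    rw [norm_inv, hznorm i, ← Real.exp_neg, neg_neg]
    exact Real.exp_lt_one_iff.mpr (hYneg i h)
  set c : Fin Φ.length → ℕ → ℂ := fun i m =>
    if (0 : ℝ) < (inner ℝ (Φ.get i) Y : ℝ) then z i ^ m else -((z i)⁻¹ ^ (m + 1)) with hc
  have hci : ∀ i m, c i m =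
      if (0 : ℝ) < (inner ℝ (Φ.get i) Y : ℝ) then z i ^ m else -((z i)⁻¹ ^ (m + 1)) :=
    fun i m => by rw [hc]
  have hcnorm : ∀ i, Summable fun m => ‖c i m‖ := by
    intro i
    by_cases h : (0 : ℝ) < (inner ℝ (Φ.get i) Y : ℝ)
    · refine (summable_geometric_of_lt_one (norm_nonneg (z i)) (hlt i h)).congr fun m => ?_
      rw [hci i m, if_pos h, norm_pow]
    · refine (((summable_geometric_of_lt_one (norm_nonneg ((z i)⁻¹))
        (hltinv i h)).mul_left ‖(z i)⁻¹‖).congr fun m => ?_)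
      rw [hci i m, if_neg h, norm_neg, norm_pow, pow_succ]
      ring
  have hcsum : ∀ i, ∑' m, c i m = (1 - z i)⁻¹ := by
    intro i
    by_cases h : (0 : ℝ) < (inner ℝ (Φ.get i) Y : ℝ)
    · rw [tsum_congr (fun m => by rw [hci i m, if_pos h])]
      exact tsum_geometric_of_norm_lt_one (hlt i h)
    · rw [tsum_congr (fun m => by rw [hci i m, if_neg h])]
      refine geom_neg_aux (z i) (hz0 i) (hltinv i h) ?_
      intro h1
      have := hltinv i h
      rw [h1] at this; simp at this
  obtain ⟨hFnorm, hFsum⟩ := aux_pi c hcnorm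
  set t : (Fin Φ.length → ℕ) → Fin Φ.length → V := fun n i =>
    if (0 : ℝ) < (inner ℝ (Φ.get i) Y : ℝ) then ((n i : ℤ) • Φ.get i)
    else (-(((n i : ℤ) + 1) • Φ.get i)) with htd
  have hti : ∀ n i, t n i =
      if (0 : ℝ) < (inner ℝ (Φ.get i) Y : ℝ) then ((n i : ℤ) • Φ.get i)
      else (-(((n i : ℤ) + 1) • Φ.get i)) := fun n i => by rw [htd]
  set μ : (Fin Φ.length → ℕ) → V := fun n => ∑ i, t n i with hμ
  have hμi : ∀ n, μ n = ∑ i, t n i := fun n => by rw [hμ]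
  have hμmem : ∀ n, μ n ∈ Λ := by
    intro n
    rw [hμi]
    refine Submodule.sum_mem _ fun i _ => ?_
    rw [hti]
    by_cases h : (0 : ℝ) < (inner ℝ (Φ.get i) Y : ℝ)
    · rw [if_pos h]; exact Λ.smul_mem _ (hΦΛ _ (hmem i))
    · rw [if_neg h]; exact neg_mem (Λ.smul_mem _ (hΦΛ _ (hmem i)))
  set g : (Fin Φ.length → ℕ) → Λ := fun n => ⟨μ n, hμmem n⟩ with hg
  -- theta in terms of μ
  have htheta : ∀ lam : V, theta Φ Y lam =
      (-1 : ℤ) ^ (filterP Φ (fun φ => (inner ℝ φ Y : ℝ) < 0)).length *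
        (({n : Fin Φ.length → ℕ | μ n = lam}).ncard : ℤ) := by
    intro lam
    have hSet : {n : Fin Φ.length → ℕ |
        ∑ i : Fin Φ.length,
          (if (0 : ℝ) < (inner ℝ (Φ.get i) Y : ℝ) then ((n i : ℤ) • Φ.get i)
           else (-(((n i : ℤ) + 1) • Φ.get i))) = lam}
        = {n : Fin Φ.length → ℕ | μ n = lam} := by
      ext n
      simp only [Set.mem_setOf_eq, hμi, hti]
    rw [theta, hSet]
  set σ : ℂ := ∏ i : Fin Φ.length,
    (if (0 : ℝ) < (inner ℝ (Φ.get i) Y : ℝ) then (1 : ℂ) else -1) with hσdef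
  have hσ : σ = (-1 : ℂ) ^ (filterP Φ (fun φ => (inner ℝ φ Y : ℝ) < 0)).length := by
    rw [hσdef]; exact sign_lemma Y Φ hY
  have hσnorm : ‖σ‖ = 1 := by rw [hσ]; simp
  -- the key pointwise identity
  have hterm : ∀ (n : Fin Φ.length → ℕ) (i : Fin Φ.length),
      c i (n i) = (if (0 : ℝ) < (inner ℝ (Φ.get i) Y : ℝ) then (1 : ℂ) else -1) *
        Complex.exp (Complex.I * ((inner ℝ (t n i) X : ℝ) : ℂ) -
          ((inner ℝ (t n i) W : ℝ) : ℂ)) := by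
    intro n i
    by_cases h : (0 : ℝ) < (inner ℝ (Φ.get i) Y : ℝ)
    · rw [hci, hti, if_pos h, if_pos h, if_pos h, one_mul, E_zsmul, ← hzi i, zpow_natCast]
    · rw [hci, hti, if_neg h, if_neg h, if_neg h, neg_one_mul]
      rw [show (-(((n i : ℤ) + 1) • Φ.get i)) = (-((n i : ℤ) + 1)) • Φ.get i by
        rw [neg_smul]]
      rw [E_zsmul, ← hzi i]
      rw [show (-((n i : ℤ) + 1)) = -(((n i + 1 : ℕ) : ℤ)) by push_cast; ring]
      rw [zpow_neg, zpow_natCast, inv_pow]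
  have hEsum : ∀ n : Fin Φ.length → ℕ,
      (Complex.I * ((inner ℝ (μ n) X : ℝ) : ℂ) - ((inner ℝ (μ n) W : ℝ) : ℂ)) =
        ∑ i, (Complex.I * ((inner ℝ (t n i) X : ℝ) : ℂ) -
          ((inner ℝ (t n i) W : ℝ) : ℂ)) := by
    intro n
    rw [hμi, sum_inner, sum_inner]
    push_cast
    rw [Finset.mul_sum, ← Finset.sum_sub_distrib]
  have hFeq : ∀ n : Fin Φ.length → ℕ, (∏ i, c i (n i)) =
      σ * Complex.exp (Complex.I * ((inner ℝ (μ n) X : ℝ) : ℂ) -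
        ((inner ℝ (μ n) W : ℝ) : ℂ)) := by
    intro n
    rw [hEsum n, Complex.exp_sum, hσdef, ← Finset.prod_mul_distrib]
    exact Finset.prod_congr rfl fun i _ => hterm n i
  have hFnormEq : ∀ n : Fin Φ.length → ℕ,
      ‖∏ i, c i (n i)‖ = Real.exp (-(inner ℝ (μ n) W : ℝ)) := by
    intro n
    rw [hFeq n, norm_mul, hσnorm, one_mul, normE]
  -- fibers
  have hμlam : ∀ (lam : Λ) (b : (g ⁻¹' {lam} : Set (Fin Φ.length → ℕ))),
      μ (b : Fin Φ.length → ℕ) = (lam : V) := by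
    rintro lam ⟨n, hn⟩
    have h1 : g n = lam := hn
    have h2 := congrArg Subtype.val h1
    rw [hg] at h2
    exact h2
  have hfinite : ∀ lam : Λ, (g ⁻¹' {lam}).Finite := by
    intro lam
    by_contra hinf
    have hinf' : (g ⁻¹' {lam}).Infinite := hinf
    haveI := hinf'.to_subtype
    have hsub := hFnorm.subtype (g ⁻¹' {lam})
    have hconst : Summable (fun _ : (g ⁻¹' {lam} : Set (Fin Φ.length → ℕ)) =>
        Real.exp (-(inner ℝ (lam : V) W : ℝ))) := by
      refine hsub.congr fun b => ?_
      show ‖∏ i, c i ((b.1 : Fin Φ.length → ℕ) i)‖ = _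
      rw [hFnormEq, hμlam lam b]
    have h0 := hconst.tendsto_cofinite_zero
    exact (Real.exp_pos _).ne' (tendsto_nhds_unique h0 tendsto_const_nhds).symm
  have hsetEq : ∀ lam : Λ, (g ⁻¹' {lam} : Set (Fin Φ.length → ℕ))
      = {n : Fin Φ.length → ℕ | μ n = (lam : V)} := by
    intro lam
    ext n
    simp only [Set.mem_preimage, Set.mem_singleton_iff, Set.mem_setOf_eq,
      hg, Subtype.ext_iff]
  -- HasSum statements
  have hsummable : Summable (fun n : Fin Φ.length → ℕ => ∏ i, c i (n i)) := hFnorm.of_norm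
  have heq : ∑' n : Fin Φ.length → ℕ, ∏ i, c i (n i)
      = ∏ i : Fin Φ.length, (1 - z i)⁻¹ := by
    rw [hFsum]; exact Finset.prod_congr rfl fun i _ => hcsum i
  have hHasSum : HasSum (fun n : Fin Φ.length → ℕ => ∏ i, c i (n i))
      (∏ i : Fin Φ.length, (1 - z i)⁻¹) := heq ▸ hsummable.hasSum
  have hfib := hHasSum.tsum_fiberwise g
  have hfibN := hFnorm.hasSum.tsum_fiberwise g
  -- RHS identification
  have hRHS : (Φ.map (fun φ =>
      (1 - Complex.exp (Complex.I * ((inner ℝ φ X : ℝ) : ℂ) -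
        ((inner ℝ φ W : ℝ) : ℂ)))⁻¹)).prod = ∏ i : Fin Φ.length, (1 - z i)⁻¹ := by
    conv_lhs => rw [← List.ofFn_get Φ]
    rw [List.map_ofFn, List.prod_ofFn]
    exact Finset.prod_congr rfl fun i _ => by
      simp only [Function.comp_apply, hzi i]
  -- fiber sums, complex
  have hfibC : ∀ lam : Λ,
      (∑' b : (g ⁻¹' {lam} : Set (Fin Φ.length → ℕ)),
        ∏ i, c i ((b : Fin Φ.length → ℕ) i))
      = (theta Φ Y (lam : V) : ℂ) *
          Complex.exp (Complex.I * ((inner ℝ (lam : V) X : ℝ) : ℂ) -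
            ((inner ℝ (lam : V) W : ℝ) : ℂ)) := by
    intro lam
    haveI := (hfinite lam).to_subtype
    calc (∑' b : (g ⁻¹' {lam} : Set (Fin Φ.length → ℕ)),
          ∏ i, c i ((b : Fin Φ.length → ℕ) i))
        = ∑' _ : (g ⁻¹' {lam} : Set (Fin Φ.length → ℕ)),
            σ * Complex.exp (Complex.I * ((inner ℝ (lam : V) X : ℝ) : ℂ) -
              ((inner ℝ (lam : V) W : ℝ) : ℂ)) :=
          tsum_congr fun b => by rw [hFeq, hμlam lam b]
      _ = Nat.card (g ⁻¹' {lam} : Set (Fin Φ.length → ℕ)) •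
            (σ * Complex.exp (Complex.I * ((inner ℝ (lam : V) X : ℝ) : ℂ) -
              ((inner ℝ (lam : V) W : ℝ) : ℂ))) := tsum_const _
      _ = (theta Φ Y (lam : V) : ℂ) *
            Complex.exp (Complex.I * ((inner ℝ (lam : V) X : ℝ) : ℂ) -
              ((inner ℝ (lam : V) W : ℝ) : ℂ)) := by
          rw [nsmul_eq_mul, Nat.card_coe_set_eq, hsetEq lam, htheta, hσ]
          push_cast
          ring
  constructor
  · -- summability of the absolute series
    refine hfibN.summable.congr fun lam => ?_
    haveI := (hfinite lam).to_subtype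
    show (∑' b : (g ⁻¹' {lam} : Set (Fin Φ.length → ℕ)),
        ‖∏ i, c i ((b : Fin Φ.length → ℕ) i)‖) = _
    calc (∑' b : (g ⁻¹' {lam} : Set (Fin Φ.length → ℕ)),
          ‖∏ i, c i ((b : Fin Φ.length → ℕ) i)‖)
        = ∑' _ : (g ⁻¹' {lam} : Set (Fin Φ.length → ℕ)),
            Real.exp (-(inner ℝ (lam : V) W : ℝ)) :=
          tsum_congr fun b => by rw [hFnormEq, hμlam lam b]
      _ = Nat.card (g ⁻¹' {lam} : Set (Fin Φ.length → ℕ)) •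
            Real.exp (-(inner ℝ (lam : V) W : ℝ)) := tsum_const _
      _ = (|theta Φ Y (lam : V)| : ℝ) * Real.exp (-(inner ℝ (lam : V) W : ℝ)) := by
          rw [nsmul_eq_mul, Nat.card_coe_set_eq, hsetEq lam]
          congr 1
          rw [htheta]
          push_cast
          rw [abs_mul, abs_pow, abs_neg, abs_one, one_pow, one_mul, Nat.abs_cast]
  · -- value of the series
    calc (∑' lam : Λ, (theta Φ Y (lam : V) : ℂ) *
          Complex.exp (Complex.I * ((inner ℝ (lam : V) X : ℝ) : ℂ) -
            ((inner ℝ (lam : V) W : ℝ) : ℂ)))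
        = ∑' lam : Λ, (∑' b : (g ⁻¹' {lam} : Set (Fin Φ.length → ℕ)),
            ∏ i, c i ((b : Fin Φ.length → ℕ) i)) :=
          tsum_congr fun lam => (hfibC lam).symm
      _ = ∏ i : Fin Φ.length, (1 - z i)⁻¹ := hfib.tsum_eq
      _ = (Φ.map (fun φ =>
          (1 - Complex.exp (Complex.I * ((inner ℝ φ X : ℝ) : ℂ) -
            ((inner ℝ φ W : ℝ) : ℂ)))⁻¹)).prod := hRHS.symm

end
end

section
/- Let Φ be a finite list of nonzero elements of Λ, let Y ∈ V satisfy (φ, Y) ≠ 0 for every φ ∈ Φ, and let f : Λ → ℤ be a function whose support is contained in a half-space {λ ∈ V : (λ, Y) ≥ c} for some c ∈ ℝ. If Σ_I (−1)^{|I|} f(λ − Σ_{φ∈I} φ) = 0 for every λ ∈ Λ, where I ranges over all sublists of Φ, then f is identically zero. In other words, multiplication by the finite product Π_{φ∈Φ}(1 − e_φ) is injective on the space of formal characters supported on a half-space bounded by a hyperplane orthogonal to Y. -/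
noncomputable section

open Module

variable {V : Type*} [NormedAddCommGroup V] [InnerProductSpace ℝ V] [FiniteDimensional ℝ V]

open Finset in
lemma my_powerset_map {α β : Type*} (s : Finset α) (e : α ↪ β) :
    (s.map e).powerset = s.powerset.map (Finset.mapEmbedding e).toEmbedding := by
  ext t
  simp only [mem_powerset, mem_map, RelEmbedding.coe_toEmbedding, Finset.mapEmbedding_apply]
  rw [Finset.subset_map_iff]
  constructor
  · rintro ⟨u, hu, rfl⟩; exact ⟨u, hu, rfl⟩
  · rintro ⟨u, hu, rfl⟩; exact ⟨u, hu, rfl⟩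

open Finset in
lemma my_sum_finset_fin_succ {M : Type*} [AddCommMonoid M] (n : ℕ)
    (F : Finset (Fin (n + 1)) → M) :
    ∑ I : Finset (Fin (n + 1)), F I
      = (∑ I : Finset (Fin n), F (I.map (Fin.succEmb n)))
        + ∑ I : Finset (Fin n), F (insert 0 (I.map (Fin.succEmb n))) := by
  classical
  have h0 : (0 : Fin (n+1)) ∉ (univ : Finset (Fin n)).map (Fin.succEmb n) := by
    simp [Fin.succEmb, Fin.succ_ne_zero]
  calc ∑ I : Finset (Fin (n + 1)), F I
      = ∑ I ∈ (insert (0 : Fin (n+1)) ((univ : Finset (Fin n)).map (Fin.succEmb n))).powerset,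
          F I := by
        rw [← Finset.powerset_univ]
        congr 1
        rw [Fin.univ_succ]
        simp [Finset.cons_eq_insert, Fin.succEmb]
    _ = _ := by
        rw [Finset.sum_powerset_insert h0, my_powerset_map, Finset.sum_map, Finset.sum_map,
          Finset.powerset_univ]
        rfl

/-- Multiplication by `Π_{φ∈Φ}(1 - e_φ)` is injective on formal characters supported on a
half-space `{(λ, Y) ≥ c}` bounded by a hyperplane orthogonal to `Y`. -/
theorem eq_zero_of_halfspace_support_of_conv_eq_zero
    (Λ : Submodule ℤ V) (hΛ : IsLattice Λ)
    (Φ : List V) (hΦ0 : ∀ φ ∈ Φ, φ ≠ 0) (hΦΛ : ∀ φ ∈ Φ, φ ∈ Λ)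
    (Y : V) (hY : ∀ φ ∈ Φ, (inner ℝ φ Y : ℝ) ≠ 0)
    (f : V → ℤ) (c : ℝ)
    (hsupp : ∀ lam ∈ Λ, f lam ≠ 0 → c ≤ (inner ℝ lam Y : ℝ))
    (hconv : ∀ lam ∈ Λ,
      (∑ I : Finset (Fin Φ.length),
        (-1 : ℤ) ^ I.card * f (lam - ∑ i ∈ I, Φ.get i)) = 0) :
    ∀ lam ∈ Λ, f lam = 0 := by
  induction Φ generalizing f c with
  | nil =>
    intro lam hlam
    have := hconv lam hlam
    simpa [show (default : Finset (Fin 0)) = ∅ from rfl] using this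
  | cons φ Ψ ih =>
    have hφY : (inner ℝ φ Y : ℝ) ≠ 0 := hY φ (List.mem_cons_self)
    have hφΛ : φ ∈ Λ := hΦΛ φ (List.mem_cons_self)
    set g : V → ℤ := fun lam => f lam - f (lam - φ) with hg
    have key : ∀ lam ∈ Λ, g lam = 0 := by
      refine ih (fun ψ hψ => hΦ0 ψ (List.mem_cons_of_mem _ hψ)) (fun ψ hψ => hΦΛ ψ (List.mem_cons_of_mem _ hψ))
        (fun ψ hψ => hY ψ (List.mem_cons_of_mem _ hψ)) g (min c (c + (inner ℝ φ Y : ℝ))) ?_ ?_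
      · intro lam hlam hgl
        by_cases hf : f lam = 0
        · have hf2 : f (lam - φ) ≠ 0 := by
            intro h; exact hgl (by simp [hg, hf, h])
          have h1 := hsupp (lam - φ) (Λ.sub_mem hlam hφΛ) hf2
          rw [inner_sub_left] at h1
          exact le_trans (min_le_right _ _) (by linarith)
        · exact le_trans (min_le_left _ _) (hsupp lam hlam hf)
      · intro lam hlam
        have H : (∑ I : Finset (Fin (Ψ.length + 1)),
            (-1 : ℤ) ^ I.card * f (lam - ∑ i ∈ I, (φ :: Ψ).get i)) = 0 := hconv lam hlam
        rw [my_sum_finset_fin_succ Ψ.length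
          (fun I => (-1 : ℤ) ^ I.card * f (lam - ∑ i ∈ I, (φ :: Ψ).get i))] at H
        have h0 : ∀ I : Finset (Fin Ψ.length),
            (0 : Fin (Ψ.length + 1)) ∉ I.map (Fin.succEmb Ψ.length) := by
          intro I
          simp [Fin.succEmb, Fin.succ_ne_zero]
        have e1 : ∀ I : Finset (Fin Ψ.length),
            (∑ i ∈ I.map (Fin.succEmb Ψ.length), (φ :: Ψ).get i) = ∑ i ∈ I, Ψ.get i := by
          intro I
          rw [Finset.sum_map]
          rfl
        have e2 : ∀ I : Finset (Fin Ψ.length),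
            (-1 : ℤ) ^ (I.map (Fin.succEmb Ψ.length)).card *
              f (lam - ∑ i ∈ I.map (Fin.succEmb Ψ.length), (φ :: Ψ).get i)
            = (-1 : ℤ) ^ I.card * f (lam - ∑ i ∈ I, Ψ.get i) := by
          intro I
          rw [Finset.card_map, e1]
        have e3 : ∀ I : Finset (Fin Ψ.length),
            (-1 : ℤ) ^ (insert (0 : Fin (Ψ.length+1)) (I.map (Fin.succEmb Ψ.length))).card *
              f (lam - ∑ i ∈ insert (0 : Fin (Ψ.length+1)) (I.map (Fin.succEmb Ψ.length)),
                (φ :: Ψ).get i)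
            = -((-1 : ℤ) ^ I.card * f ((lam - ∑ i ∈ I, Ψ.get i) - φ)) := by
          intro I
          rw [Finset.card_insert_of_notMem (h0 I), Finset.sum_insert (h0 I), Finset.card_map, e1]
          have : lam - ((φ :: Ψ).get (0 : Fin (Ψ.length+1)) + ∑ i ∈ I, Ψ.get i) = (lam - ∑ i ∈ I, Ψ.get i) - φ := by
            show lam - (φ + _) = _
            abel
          rw [this, pow_succ]
          ring
        rw [Finset.sum_congr rfl (fun I _ => e2 I), Finset.sum_congr rfl (fun I _ => e3 I)] at H
        rw [Finset.sum_neg_distrib] at H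
        simp only [hg]
        simp only [mul_sub]
        rw [Finset.sum_sub_distrib]
        linarith [H]
    -- now f lam = f (lam - φ) for lam ∈ Λ
    have step : ∀ lam ∈ Λ, f lam = f (lam - φ) := by
      intro lam hlam
      have := key lam hlam
      simp only [hg] at this
      linarith
    obtain ⟨ψ, hψΛ, hψY, hstep⟩ : ∃ ψ, ψ ∈ Λ ∧ (0:ℝ) < (inner ℝ ψ Y : ℝ) ∧
        ∀ lam ∈ Λ, f lam = f (lam - ψ) := by
      rcases hφY.lt_or_gt with h | h
      · refine ⟨-φ, Λ.neg_mem hφΛ, by rw [inner_neg_left]; linarith, ?_⟩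
        intro lam hlam
        have := step (lam + φ) (Λ.add_mem hlam hφΛ)
        simp only [add_sub_cancel_right] at this
        rw [sub_neg_eq_add]
        exact this.symm
      · exact ⟨φ, hφΛ, h, step⟩
    have hiter : ∀ n : ℕ, ∀ lam ∈ Λ, f lam = f (lam - n • ψ) := by
      intro n
      induction n with
      | zero => intro lam hlam; simp
      | succ n ihn =>
        intro lam hlam
        have h1 := hstep lam hlam
        have h2 := ihn (lam - ψ) (Λ.sub_mem hlam hψΛ)
        rw [h1, h2]
        congr 1
        rw [succ_nsmul]
        abel
    intro lam hlam
    by_contra hne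
    obtain ⟨n, hn⟩ := exists_nat_gt (((inner ℝ lam Y : ℝ) - c) / (inner ℝ ψ Y : ℝ))
    have hlt : (inner ℝ (lam - n • ψ) Y : ℝ) < c := by
      rw [inner_sub_left]
      have : ((n : ℝ)) • ψ = n • ψ := by
        exact Nat.cast_smul_eq_nsmul ℝ n ψ
      rw [← this, real_inner_smul_left]
      rw [div_lt_iff₀ hψY] at hn
      linarith
    have hmem : lam - n • ψ ∈ Λ := Λ.sub_mem hlam (Submodule.smul_of_tower_mem _ n hψΛ)
    have hne2 : f (lam - n • ψ) ≠ 0 := by rw [← hiter n lam hlam]; exact hne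
    exact absurd (hsupp _ hmem hne2) (not_le.2 hlt)


end
end

section
/- Let Φ be a finite list of nonzero elements of Λ, let Y ∈ V be polarizing for Φ, and let φ₀ be an entry of Φ. Denote by Φ − {φ₀} the list obtained from Φ by decreasing the multiplicity of φ₀ by one. Then for every λ ∈ Λ, Θ[Φ↑Y](λ) − Θ[Φ↑Y](λ − φ₀) = Θ[(Φ − {φ₀})↑Y](λ); that is, (1 − e_{φ₀}) · Θ[Φ↑Y] = Θ[(Φ − {φ₀})↑Y] as formal characters. -/
noncomputable section

open Module

variable {V : Type*} [NormedAddCommGroup V] [InnerProductSpace ℝ V] [FiniteDimensional ℝ V]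

namespace OneSubAux

/-- The summand of the partition function. -/
def trm (Y v : V) (m : ℕ) : V :=
  if (0 : ℝ) < (inner ℝ v Y : ℝ) then ((m : ℤ) • v) else (-(((m : ℤ) + 1) • v))

/-- The increment of `trm` when `m` grows by one. -/
def sg (Y v : V) : V := if (0 : ℝ) < (inner ℝ v Y : ℝ) then v else -v

/-- The solution set. -/
def sol (Φ : List V) (Y μ : V) : Set (Fin Φ.length → ℕ) :=
  {n | ∑ i, trm Y (Φ.get i) (n i) = μ}

def negP (Y : V) : V → Bool :=
  fun v => @decide ((inner ℝ v Y : ℝ) < 0) (Classical.propDecidable _)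

lemma theta_eq (Φ : List V) (Y lam : V) :
    theta Φ Y lam = (-1 : ℤ) ^ (Φ.countP (negP Y)) * ((sol Φ Y lam).ncard : ℤ) := by
  rw [List.countP_eq_length_filter]; rfl

lemma trm_succ (Y v : V) (m : ℕ) : trm Y v (m + 1) = trm Y v m + sg Y v := by
  unfold trm sg
  split_ifs with h
  · push_cast [add_smul, one_smul]; ring_nf
  · push_cast [add_smul, one_smul]
    abel

lemma le_inner_trm (Y v : V) (ha : (inner ℝ v Y : ℝ) ≠ 0) (m : ℕ) :
    (m : ℝ) * |(inner ℝ v Y : ℝ)| ≤ (inner ℝ (trm Y v m) Y : ℝ) := by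
  unfold trm
  split_ifs with h
  · rw [← Int.cast_smul_eq_zsmul ℝ, real_inner_smul_left, abs_of_pos h]
    push_cast
    exact le_rfl
  · have h' : (inner ℝ v Y : ℝ) < 0 := lt_of_le_of_ne (not_lt.1 h) ha
    rw [inner_neg_left, ← Int.cast_smul_eq_zsmul ℝ, real_inner_smul_left, abs_of_neg h']
    push_cast
    nlinarith

lemma inner_trm_nonneg (Y v : V) (ha : (inner ℝ v Y : ℝ) ≠ 0) (m : ℕ) :
    (0 : ℝ) ≤ (inner ℝ (trm Y v m) Y : ℝ) :=
  le_trans (by positivity) (le_inner_trm Y v ha m)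

lemma sol_finite (Φ : List V) (Y : V) (hY : Polarizing Φ Y) (μ : V) :
    (sol Φ Y μ).Finite := by
  classical
  have key : ∀ n ∈ sol Φ Y μ, ∀ i : Fin Φ.length,
      (n i : ℝ) * |(inner ℝ (Φ.get i) Y : ℝ)| ≤ (inner ℝ μ Y : ℝ) := by
    intro n hn i
    have hmem : ∀ j : Fin Φ.length, Φ.get j ∈ Φ := fun j => List.get_mem Φ j
    have hsum : ∑ j : Fin Φ.length, (inner ℝ (trm Y (Φ.get j) (n j)) Y : ℝ) = inner ℝ μ Y := by
      rw [← sum_inner]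
      exact congrArg (fun w => (inner ℝ w Y : ℝ)) hn
    calc (n i : ℝ) * |(inner ℝ (Φ.get i) Y : ℝ)|
        ≤ (inner ℝ (trm Y (Φ.get i) (n i)) Y : ℝ) := le_inner_trm Y _ (hY _ (hmem i)) _
      _ ≤ ∑ j : Fin Φ.length, (inner ℝ (trm Y (Φ.get j) (n j)) Y : ℝ) :=
          Finset.single_le_sum (fun j _ => inner_trm_nonneg Y _ (hY _ (hmem j)) _)
            (Finset.mem_univ i)
      _ = inner ℝ μ Y := hsum
  apply Set.Finite.subset
    (Set.Finite.pi (t := fun i : Fin Φ.length =>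
      Set.Iic (Nat.ceil ((inner ℝ μ Y : ℝ) / |(inner ℝ (Φ.get i) Y : ℝ)|)))
      (fun i => Set.finite_Iic _))
  intro n hn
  rw [Set.mem_pi]
  intro i _
  have hai : (0:ℝ) < |(inner ℝ (Φ.get i) Y : ℝ)| :=
    abs_pos.2 (hY _ (List.get_mem Φ i))
  have h1 : (n i : ℝ) ≤ (inner ℝ μ Y : ℝ) / |(inner ℝ (Φ.get i) Y : ℝ)| :=
    (le_div_iff₀ hai).2 (key n hn i)
  have h2 : (n i : ℝ) ≤ (Nat.ceil ((inner ℝ μ Y : ℝ) / |(inner ℝ (Φ.get i) Y : ℝ)|) : ℝ) :=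
    h1.trans (Nat.le_ceil _)
  exact_mod_cast h2


lemma sol_cons_mem (Φ' : List V) (φ₀ Y μ : V) (n : Fin (Φ'.length + 1) → ℕ) :
    n ∈ sol (φ₀ :: Φ') Y μ ↔
      trm Y φ₀ (n 0) + ∑ i : Fin Φ'.length, trm Y (Φ'.get i) (n i.succ) = μ := by
  show (∑ i : Fin (Φ'.length + 1), trm Y ((φ₀ :: Φ').get i) (n i)) = μ ↔ _
  rw [Fin.sum_univ_succ]
  have h0 : (φ₀ :: Φ').get (0 : Fin (Φ'.length + 1)) = φ₀ := rfl
  have hs : ∀ i : Fin Φ'.length, (φ₀ :: Φ').get i.succ = Φ'.get i := by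
    intro i; cases i; simp [List.get_cons_succ]
  rw [h0]
  constructor <;> intro h <;> [skip; skip] <;>
    · rw [show (∑ i : Fin Φ'.length, trm Y ((φ₀ :: Φ').get i.succ) (n i.succ))
          = ∑ i : Fin Φ'.length, trm Y (Φ'.get i) (n i.succ) from
        Finset.sum_congr rfl (fun i _ => by rw [hs i])] at *
      exact h

lemma ncard_sol_cons (Φ' : List V) (φ₀ Y : V) (hY : Polarizing (φ₀ :: Φ') Y) (μ : V) :
    (sol (φ₀ :: Φ') Y μ).ncard
      = (sol Φ' Y (μ - trm Y φ₀ 0)).ncard + (sol (φ₀ :: Φ') Y (μ - sg Y φ₀)).ncard := by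
  classical
  have hYt : Polarizing Φ' Y := fun φ hφ => hY φ (List.mem_cons_of_mem _ hφ)
  have hfin : (sol (φ₀ :: Φ') Y μ).Finite := sol_finite _ _ hY μ
  set A : Set (Fin (Φ'.length + 1) → ℕ) := {n | n ∈ sol (φ₀ :: Φ') Y μ ∧ n 0 = 0} with hAdef
  set B : Set (Fin (Φ'.length + 1) → ℕ) := {n | n ∈ sol (φ₀ :: Φ') Y μ ∧ n 0 ≠ 0} with hBdef
  have hAB : sol (φ₀ :: Φ') Y μ = A ∪ B := by
    apply Set.ext
    intro n
    constructor
    · intro hn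
      by_cases h : n (0 : Fin (Φ'.length + 1)) = 0
      · exact Or.inl ⟨hn, h⟩
      · exact Or.inr ⟨hn, h⟩
    · rintro (⟨hn, -⟩ | ⟨hn, -⟩) <;> exact hn
  have hdis : Disjoint A B := by
    rw [Set.disjoint_left]; rintro n ⟨_, h0⟩ ⟨_, h1⟩; exact h1 h0
  have hAfin : A.Finite := hfin.subset (fun n hn => hn.1)
  have hBfin : B.Finite := hfin.subset (fun n hn => hn.1)
  have hA : sol Φ' Y (μ - trm Y φ₀ 0) = Fin.tail '' A := by
    ext m
    constructor
    · intro hm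
      refine ⟨Fin.cons 0 m, ⟨?_, by simp⟩, Fin.tail_cons _ _⟩
      rw [sol_cons_mem]
      simp only [Fin.cons_zero, Fin.cons_succ]
      have : (∑ i : Fin Φ'.length, trm Y (Φ'.get i) (m i)) = μ - trm Y φ₀ 0 := hm
      rw [this]; abel
    · rintro ⟨n, ⟨hn, h0⟩, rfl⟩
      have h1 := (sol_cons_mem Φ' φ₀ Y μ n).1 hn
      rw [h0] at h1
      show (∑ i : Fin Φ'.length, trm Y (Φ'.get i) (Fin.tail n i)) = μ - trm Y φ₀ 0
      simp only [Fin.tail]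
      rw [eq_sub_iff_add_eq, add_comm]
      exact h1
  have hAcard : (sol Φ' Y (μ - trm Y φ₀ 0)).ncard = A.ncard := by
    rw [hA]
    apply Set.ncard_image_of_injOn
    intro n hn n' hn' h
    funext i
    refine Fin.cases ?_ (fun j => ?_) i
    · rw [hn.2, hn'.2]
    · exact congrFun h j
  have hB : B = (fun n : Fin (Φ'.length + 1) → ℕ =>
      Fin.cons (n 0 + 1) (Fin.tail n)) '' (sol (φ₀ :: Φ') Y (μ - sg Y φ₀)) := by
    ext n
    constructor
    · rintro ⟨hn, h0⟩
      refine ⟨Fin.cons (n 0 - 1) (Fin.tail n), ?_, ?_⟩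
      · rw [sol_cons_mem]
        simp only [Fin.cons_zero, Fin.cons_succ]
        have h1 := (sol_cons_mem Φ' φ₀ Y μ n).1 hn
        have h2 : n 0 - 1 + 1 = n 0 := Nat.sub_add_cancel (Nat.one_le_iff_ne_zero.2 h0)
        have h3 : trm Y φ₀ (n 0) = trm Y φ₀ (n 0 - 1) + sg Y φ₀ := by
          rw [← trm_succ, h2]
        rw [h3] at h1
        rw [eq_sub_iff_add_eq]
        show trm Y φ₀ (n 0 - 1) + (∑ i : Fin Φ'.length, trm Y (Φ'.get i) (n i.succ)) + sg Y φ₀ = μ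
        rw [← h1]; abel
      · show Fin.cons (Fin.cons (n 0 - 1) (Fin.tail n) 0 + 1)
            (Fin.tail (Fin.cons (n 0 - 1) (Fin.tail n))) = n
        rw [Fin.cons_zero, Fin.tail_cons,
          Nat.sub_add_cancel (Nat.one_le_iff_ne_zero.2 h0)]
        exact Fin.cons_self_tail n
    · rintro ⟨m, hm, rfl⟩
      constructor
      · rw [sol_cons_mem]
        simp only [Fin.cons_zero, Fin.cons_succ]
        have h1 := (sol_cons_mem Φ' φ₀ Y (μ - sg Y φ₀) m).1 hm
        rw [trm_succ]
        show trm Y φ₀ (m 0) + sg Y φ₀ +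
          (∑ i : Fin Φ'.length, trm Y (Φ'.get i) (Fin.tail m i)) = μ
        simp only [Fin.tail]
        rw [eq_comm, ← sub_eq_iff_eq_add'] at h1 ⊢
        · rw [← h1]; abel
      · simp
  have hBcard : B.ncard = (sol (φ₀ :: Φ') Y (μ - sg Y φ₀)).ncard := by
    rw [hB]
    apply Set.ncard_image_of_injOn
    intro n _ n' _ h
    have h0 := congrFun h 0
    simp only [Fin.cons_zero] at h0
    funext i
    refine Fin.cases ?_ (fun j => ?_) i
    · omega
    · have := congrFun h j.succ
      simpa only [Fin.cons_succ, Fin.tail] using this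
  rw [hAB, Set.ncard_union_eq hdis hAfin hBfin, hAcard, hBcard]


lemma perm_get_equiv {α : Type*} {l1 l2 : List α} (h : l1.Perm l2) :
    ∃ e : Fin l1.length ≃ Fin l2.length, ∀ i, l2.get (e i) = l1.get i := by
  induction h with
  | nil => exact ⟨Equiv.refl _, fun i => rfl⟩
  | cons x h ih =>
    obtain ⟨e, he⟩ := ih
    refine ⟨(finSuccEquiv _).trans ((Equiv.optionCongr e).trans (finSuccEquiv _).symm), ?_⟩
    intro i
    refine Fin.cases ?_ (fun j => ?_) i
    · simp
    · simpa using he j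
  | swap x y l =>
    refine ⟨Equiv.swap ⟨0, by simp⟩ ⟨1, by simp⟩, ?_⟩
    rintro ⟨(_ | _ | v), hv⟩
    · simp [Equiv.swap_apply_def, Fin.ext_iff]
    · simp [Equiv.swap_apply_def, Fin.ext_iff]
    · simp [Equiv.swap_apply_def, Fin.ext_iff]
  | trans h1 h2 ih1 ih2 =>
    obtain ⟨e1, he1⟩ := ih1
    obtain ⟨e2, he2⟩ := ih2
    exact ⟨e1.trans e2, fun i => by rw [Equiv.trans_apply, he2, he1]⟩

lemma theta_perm (Φ Ψ : List V) (h : Φ.Perm Ψ) (Y lam : V) :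
    theta Φ Y lam = theta Ψ Y lam := by
  obtain ⟨e, he⟩ := perm_get_equiv h
  rw [theta_eq, theta_eq, h.countP_eq (negP Y)]
  congr 2
  have hset : sol Φ Y lam = (fun n : Fin Ψ.length → ℕ => n ∘ e) '' sol Ψ Y lam := by
    ext n
    constructor
    · intro hn
      refine ⟨n ∘ e.symm, ?_, ?_⟩
      · show (∑ j : Fin Ψ.length, trm Y (Ψ.get j) (n (e.symm j))) = lam
        rw [← hn]
        exact (Fintype.sum_equiv e _ _ (fun i => by
          rw [he i, e.symm_apply_apply])).symm
      · funext i; simp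
    · rintro ⟨m, hm, rfl⟩
      show (∑ i : Fin Φ.length, trm Y (Φ.get i) (m (e i))) = lam
      rw [← hm]
      exact Fintype.sum_equiv e _ _ (fun i => by rw [he i])
  rw [hset]
  exact Set.ncard_image_of_injOn (fun n _ m _ hnm => by
    funext j
    have := congrFun hnm (e.symm j)
    simpa using this)

end OneSubAux

/-- `(1 - e_{φ₀}) · Θ[Φ↑Y] = Θ[(Φ - {φ₀})↑Y]`: removing an entry `φ₀` from `Φ` corresponds to
multiplying the partition function by `1 - e_{φ₀}`. Here `Φ'` denotes the list `Φ` with the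
multiplicity of the entry `φ₀` decreased by one, expressed via a permutation. -/
theorem one_sub_mul_theta
    (Λ : Submodule ℤ V) (hΛ : IsLattice Λ)
    (Φ Φ' : List V) (φ₀ : V) (hperm : Φ.Perm (φ₀ :: Φ'))
    (hΦ0 : ∀ φ ∈ Φ, φ ≠ 0) (hΦΛ : ∀ φ ∈ Φ, φ ∈ Λ)
    (Y : V) (hY : Polarizing Φ Y) :
    ∀ lam ∈ Λ, theta Φ Y lam - theta Φ Y (lam - φ₀) = theta Φ' Y lam := by
  intro lam _
  classical
  have hY' : Polarizing (φ₀ :: Φ') Y := fun φ hφ => hY φ (hperm.mem_iff.2 hφ)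
  rw [OneSubAux.theta_perm Φ (φ₀ :: Φ') hperm Y lam,
      OneSubAux.theta_perm Φ (φ₀ :: Φ') hperm Y (lam - φ₀),
      OneSubAux.theta_eq, OneSubAux.theta_eq, OneSubAux.theta_eq]
  have hφ₀ : (inner ℝ φ₀ Y : ℝ) ≠ 0 := hY' φ₀ List.mem_cons_self
  rw [List.countP_cons]
  rcases hφ₀.lt_or_gt with hneg | hpos
  · have hb : OneSubAux.negP Y φ₀ = true := by
      simp only [OneSubAux.negP, decide_eq_true_eq]
      exact hneg
    rw [hb]
    simp only [if_true]
    have ht0 : OneSubAux.trm Y φ₀ 0 = -φ₀ := by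
      rw [OneSubAux.trm, if_neg (not_lt.2 hneg.le)]
      norm_num
    have hsg : OneSubAux.sg Y φ₀ = -φ₀ := by
      rw [OneSubAux.sg, if_neg (not_lt.2 hneg.le)]
    have h := OneSubAux.ncard_sol_cons Φ' φ₀ Y hY' (lam - φ₀)
    rw [ht0, hsg, sub_neg_eq_add] at h
    rw [show lam - φ₀ + φ₀ = lam by abel] at h
    rw [h]
    push_cast
    ring
  · have hb : OneSubAux.negP Y φ₀ = false := by
      simp only [OneSubAux.negP, decide_eq_false_iff_not]
      exact not_lt.2 hpos.le
    rw [hb]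
    norm_num
    have ht0 : OneSubAux.trm Y φ₀ 0 = 0 := by
      rw [OneSubAux.trm, if_pos hpos]
      norm_num
    have hsg : OneSubAux.sg Y φ₀ = φ₀ := by rw [OneSubAux.sg, if_pos hpos]
    have h := OneSubAux.ncard_sol_cons Φ' φ₀ Y hY' lam
    rw [ht0, hsg, sub_zero] at h
    rw [h]
    push_cast
    ring


end
end

section
/- Let Φ be a finite list of nonzero elements of Λ spanning V, let Y ∈ V be polarizing for Φ, let T be a Φ-tope, and let q : Λ → ℂ be a quasi-polynomial function coinciding with Θ[Φ↑Y] on T ∩ Λ. Let φ₀ be an entry of Φ and set Φ' = Φ − {φ₀} (the list Φ with the multiplicity of φ₀ decreased by one). (i) If Φ' spans V, let T' be the Φ'-tope containing T, and let q' : Λ → ℂ be a quasi-polynomial function coinciding with Θ[Φ'↑Y] on T' ∩ Λ; then q(λ) − q(λ − φ₀) = q'(λ) for every λ ∈ Λ. (ii) If Φ' does not span V, then q(λ) − q(λ − φ₀) = 0 for every λ ∈ Λ. -/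
noncomputable section

open Module

variable {V : Type*} [NormedAddCommGroup V] [InnerProductSpace ℝ V] [FiniteDimensional ℝ V]

open MvPolynomial in
private lemma mv_grid_zero : ∀ {n : ℕ} (p : MvPolynomial (Fin n) ℂ) (S : Fin n → Finset ℂ),
    (∀ i, p.totalDegree < (S i).card) →
    (∀ x : Fin n → ℂ, (∀ i, x i ∈ S i) → MvPolynomial.eval x p = 0) → p = 0 := by
  intro n
  induction n with
  | zero =>
    intro p S hS h
    clear hS
    apply (MvPolynomial.isEmptyRingEquiv ℂ (Fin 0)).injective
    rw [map_zero]
    convert h finZeroElim (fun i => i.elim0)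
    clear h
    induction p using MvPolynomial.induction_on with
    | C a => simp; exact coeff_zero_C a
    | add p q hp hq => simp only [map_add]; rw [hp, hq]
    | mul_X p i _ => exact i.elim0
  | succ n ih =>
    intro p S hdeg h
    have hP : finSuccEquiv ℂ n p = 0 := by
      apply Polynomial.ext
      intro i
      rw [Polynomial.coeff_zero]
      apply ih _ (fun j => S j.succ)
      · intro j
        by_cases hc : (finSuccEquiv ℂ n p).coeff i = 0
        · rw [hc]; simpa [MvPolynomial.totalDegree_zero] using
            (Nat.zero_lt_of_lt (hdeg j.succ)).trans_le (le_refl _)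
        · calc ((finSuccEquiv ℂ n p).coeff i).totalDegree
              ≤ p.totalDegree := le_trans (Nat.le_add_right _ _)
                (totalDegree_coeff_finSuccEquiv_add_le p i hc)
            _ < (S j.succ).card := hdeg j.succ
      · intro x hx
        -- univariate polynomial in the first variable
        set U : Polynomial ℂ := (finSuccEquiv ℂ n p).map (MvPolynomial.eval x) with hU
        have hUeval : ∀ a ∈ S 0, U.eval a = 0 := by
          intro a ha
          have h1 : U.eval a = (MvPolynomial.eval x)
              (Polynomial.eval (MvPolynomial.C a) (finSuccEquiv ℂ n p)) := by
            rw [hU, Polynomial.eval_map, Polynomial.eval, Polynomial.hom_eval₂]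
            simp
          rw [h1, MvPolynomial.eval_polynomial_eval_finSuccEquiv]
          apply h
          intro j
          refine Fin.cases ?_ ?_ j
          · simpa using ha
          · intro k; simpa using hx k
        have hUz : U = 0 := by
          apply Polynomial.eq_zero_of_natDegree_lt_card_of_eval_eq_zero' U (S 0) hUeval
          calc U.natDegree ≤ (finSuccEquiv ℂ n p).natDegree := Polynomial.natDegree_map_le
            _ = p.degreeOf 0 := natDegree_finSuccEquiv p
            _ ≤ p.totalDegree := degreeOf_le_totalDegree p 0
            _ < (S 0).card := hdeg 0
        have := congrArg (fun q => Polynomial.coeff q i) hUz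
        simpa [hU, Polynomial.coeff_map] using this
    have := congrArg (finSuccEquiv ℂ n).symm hP
    simpa using this

section PolyFun
variable {W W' : Type*} [AddCommGroup W] [Module ℝ W] [AddCommGroup W'] [Module ℝ W']

lemma IsPolyFun.const (c : ℂ) : IsPolyFun (fun _ : W => c) :=
  Subalgebra.algebraMap_mem _ c

lemma IsPolyFun.sub {p q : W → ℂ} (hp : IsPolyFun p) (hq : IsPolyFun q) :
    IsPolyFun (p - q) := Subalgebra.sub_mem _ hp hq

lemma IsPolyFun.comp_affine {p : W → ℂ} (hp : IsPolyFun p) (L : W' →ₗ[ℝ] W) (w₀ : W) :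
    IsPolyFun (fun x => p (w₀ + L x)) := by
  unfold IsPolyFun at hp ⊢
  induction hp using Algebra.adjoin_induction with
  | mem g hg =>
    obtain ⟨l, rfl⟩ := hg
    have : (fun x => (((l (w₀ + L x)) : ℝ) : ℂ))
        = (fun _ : W' => ((l w₀ : ℝ) : ℂ)) + (fun x => (((l.comp L) x : ℝ) : ℂ)) := by
      funext x; simp [map_add]
    rw [this]
    exact Subalgebra.add_mem _ (Subalgebra.algebraMap_mem _ _)
      (Algebra.subset_adjoin ⟨l.comp L, rfl⟩)
  | algebraMap r => exact Subalgebra.algebraMap_mem _ r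
  | add x y hx hy ihx ihy => exact Subalgebra.add_mem _ ihx ihy
  | mul x y hx hy ihx ihy => exact Subalgebra.mul_mem _ ihx ihy

lemma IsPolyFun.exists_mvpoly {n : ℕ} {p : (Fin n → ℝ) → ℂ} (hp : IsPolyFun p) :
    ∃ P : MvPolynomial (Fin n) ℂ,
      ∀ t : Fin n → ℝ, p t = MvPolynomial.eval (fun i => ((t i : ℝ) : ℂ)) P := by
  unfold IsPolyFun at hp
  induction hp using Algebra.adjoin_induction with
  | mem g hg =>
    obtain ⟨l, rfl⟩ := hg
    refine ⟨∑ i : Fin n, MvPolynomial.C ((l (Pi.single i 1) : ℝ) : ℂ) * MvPolynomial.X i, ?_⟩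
    intro t
    have ht : t = ∑ i : Fin n, t i • (Pi.single i (1:ℝ) : Fin n → ℝ) := by
      funext j
      rw [Finset.sum_apply]
      simp [Pi.single_apply]
    calc ((l t : ℝ) : ℂ)
        = ((l (∑ i : Fin n, t i • (Pi.single i (1:ℝ) : Fin n → ℝ)) : ℝ) : ℂ) := by rw [← ht]
      _ = ∑ i : Fin n, ((t i : ℝ) : ℂ) * ((l ((Pi.single i (1:ℝ) : Fin n → ℝ)) : ℝ) : ℂ) := by
          simp only [map_sum, map_smul, smul_eq_mul]; push_cast; ring
      _ = _ := by simp [mul_comm]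
  | algebraMap r => exact ⟨MvPolynomial.C r, by simp⟩
  | add x y hx hy ihx ihy =>
    obtain ⟨P, hP⟩ := ihx; obtain ⟨Q, hQ⟩ := ihy
    exact ⟨P + Q, fun t => by simp [hP t, hQ t]⟩
  | mul x y hx hy ihx ihy =>
    obtain ⟨P, hP⟩ := ihx; obtain ⟨Q, hQ⟩ := ihy
    exact ⟨P * Q, fun t => by simp [hP t, hQ t]⟩

end PolyFun

lemma IsQuasiPoly.sub' {W : Type*} [AddCommGroup W] [Module ℝ W] {Ξ : Submodule ℤ W}
    {f g : W → ℂ} (hf : IsQuasiPoly Ξ f) (hg : IsQuasiPoly Ξ g) :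
    IsQuasiPoly Ξ (fun v => f v - g v) := by
  obtain ⟨A, hA, ⟨N, hN, hNs⟩, hfA⟩ := hf
  obtain ⟨B, hB, ⟨M, hM, hMs⟩, hgB⟩ := hg
  refine ⟨A ⊓ B, le_trans inf_le_left hA, ⟨N * M, Nat.mul_pos hN hM, ?_⟩, ?_⟩
  · intro v hv
    constructor
    · have h1 : ((N * M : ℕ) : ℤ) • v = (N : ℤ) • ((M : ℤ) • v) := by
        push_cast; rw [mul_smul]
      rw [h1]
      exact hNs _ (Ξ.smul_mem _ hv)
    · have h1 : ((N * M : ℕ) : ℤ) • v = (M : ℤ) • ((N : ℤ) • v) := by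
        push_cast; rw [mul_comm, mul_smul]
      rw [h1]
      exact hMs _ (Ξ.smul_mem _ hv)
  · intro ξ hξ
    obtain ⟨p, hp, hfp⟩ := hfA ξ hξ
    obtain ⟨q, hq, hgq⟩ := hgB ξ hξ
    refine ⟨p - q, Subalgebra.sub_mem _ hp hq, fun μ hμ => ?_⟩
    rw [Pi.sub_apply, ← hfp μ hμ.1, ← hgq μ hμ.2]

lemma IsQuasiPoly.translate' {W : Type*} [AddCommGroup W] [Module ℝ W] {Ξ : Submodule ℤ W}
    {f : W → ℂ} (hf : IsQuasiPoly Ξ f) {w : W} (hw : w ∈ Ξ) :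
    IsQuasiPoly Ξ (fun v => f (v - w)) := by
  obtain ⟨A, hA, hidx, hfA⟩ := hf
  refine ⟨A, hA, hidx, fun ξ hξ => ?_⟩
  obtain ⟨p, hp, hfp⟩ := hfA (ξ - w) (Submodule.sub_mem _ hξ hw)
  refine ⟨fun v => p (v - w), ?_, ?_⟩
  · have h1 := hp.comp_affine (LinearMap.id (R := ℝ) (M := W)) (-w)
    have h2 : (fun v : W => p (v - w)) = fun x => p (-w + LinearMap.id (R := ℝ) x) := by
      funext v; rw [LinearMap.id_apply, sub_eq_neg_add]
    rw [h2]; exact h1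
  · intro μ hμ
    have := hfp μ hμ
    have h3 : ξ - w + μ = ξ + μ - w := by abel
    rw [h3] at this
    exact this

lemma quasi_vanish (Λ : Submodule ℤ V) (hΛ : IsLattice Λ) (f : V → ℂ) (hf : IsQuasiPoly Λ f)
    (h : ∀ R : ℝ, ∃ x : V, ∀ v ∈ Λ, dist v x < R → f v = 0) :
    ∀ v ∈ Λ, f v = 0 := by
  obtain ⟨hspan, ⟨b⟩⟩ := hΛ
  set n := finrank ℝ V with hn
  set B : Fin n → V := fun i => ((b i : Λ) : V) with hBdef
  have hBΛ : ∀ i, B i ∈ Λ := fun i => (b i).2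
  have htop : ⊤ ≤ Submodule.span ℝ (Set.range B) := by
    rw [← hspan]
    refine le_trans (le_of_eq rfl) ?_
    rw [Submodule.span_le]
    intro x hx
    have hxr : (⟨x, hx⟩ : Λ) = ∑ i, b.repr ⟨x, hx⟩ i • b i := (Basis.sum_repr b ⟨x, hx⟩).symm
    have : x = ∑ i, b.repr ⟨x, hx⟩ i • B i := by
      have := congrArg (Subtype.val) hxr
      refine this.trans ?_
      rw [Submodule.coe_sum]
      exact Finset.sum_congr rfl fun i _ => by rw [hBdef]; rfl
    rw [this]
    refine Submodule.sum_mem _ fun i _ => ?_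
    rw [← Int.cast_smul_eq_zsmul ℝ]
    exact Submodule.smul_mem _ _ (Submodule.subset_span ⟨i, rfl⟩)
  have hcard : Fintype.card (Fin n) = finrank ℝ V := by simp [hn]
  set Br : Basis (Fin n) ℝ V := basisOfTopLeSpanOfCardEqFinrank B htop hcard with hBr
  have hBrB : ∀ i, Br i = B i := by
    intro i; rw [hBr, coe_basisOfTopLeSpanOfCardEqFinrank]
  intro lam hlam
  obtain ⟨Ξ₀, hΞle, ⟨N, hNpos, hNmem⟩, hcoset⟩ := hf
  obtain ⟨p, hpoly, hp⟩ := hcoset lam hlam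
  set L : (Fin n → ℝ) →ₗ[ℝ] V := (Pi.basisFun ℝ (Fin n)).constr ℝ (fun i => (N : ℝ) • B i)
    with hLdef
  have hL : ∀ t : Fin n → ℝ, L t = ∑ i, t i • ((N : ℝ) • B i) := by
    intro t
    rw [hLdef, Basis.constr_apply_fintype]
    simp [Pi.basisFun_equivFun]
  obtain ⟨P, hP⟩ := (hpoly.comp_affine L lam).exists_mvpoly
  have hmem : ∀ k : Fin n → ℤ, L (fun i => (k i : ℝ)) ∈ Ξ₀ := by
    intro k
    have h1 : L (fun i => (k i : ℝ)) = ∑ i, k i • ((N : ℤ) • B i) := by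
      rw [hL]
      refine Finset.sum_congr rfl fun i _ => ?_
      rw [show ((N : ℝ)) • B i = ((N : ℤ) : ℝ) • B i by norm_num,
        Int.cast_smul_eq_zsmul, Int.cast_smul_eq_zsmul]
    rw [h1]
    exact Submodule.sum_mem _ fun i _ => Submodule.smul_mem _ _ (hNmem _ (hBΛ i))
  set M := P.totalDegree with hM
  set R₀ : ℝ := (N : ℝ) * (M + 1) * (∑ i, ‖B i‖) + 1 with hR₀
  obtain ⟨x, hx⟩ := h R₀
  set u : Fin n → ℝ := fun i => Br.repr (x - lam) i with hu
  set c : Fin n → ℤ := fun i => ⌊u i / (N : ℝ)⌋ with hc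
  have hub : ∀ i, |(N : ℝ) * ((c i : ℝ)) - u i| ≤ N := by
    intro i
    have hNpos' : (0 : ℝ) < N := by exact_mod_cast hNpos
    have h1 : (c i : ℝ) ≤ u i / N := Int.floor_le _
    have h2 : u i / N < c i + 1 := Int.lt_floor_add_one _
    rw [abs_le]
    constructor
    · nlinarith [(div_le_iff₀ hNpos').mp (le_of_lt h2)]
    · nlinarith [(le_div_iff₀ hNpos').mp h1]
  have hdist : ∀ k : Fin n → ℕ, (∀ i, k i ≤ M) →
      dist (lam + L (fun i => ((c i + (k i : ℤ) : ℤ) : ℝ))) x < R₀ := by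
    intro k hk
    have hNpos' : (0 : ℝ) < N := by exact_mod_cast hNpos
    have hxl : x - lam = ∑ i, u i • B i := by
      conv_lhs => rw [← Basis.sum_repr Br (x - lam)]
      exact Finset.sum_congr rfl fun i _ => by rw [hBrB]
    set tt : Fin n → ℝ := fun i => ((c i + (k i : ℤ) : ℤ) : ℝ) with htt
    have hdiff : lam + L tt - x = ∑ i, ((N : ℝ) * tt i - u i) • B i := by
      have h1 : lam + L tt - x = L tt - (x - lam) := by abel
      rw [h1, hL, hxl, ← Finset.sum_sub_distrib]
      refine Finset.sum_congr rfl fun i _ => ?_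
      rw [smul_smul, ← sub_smul, mul_comm]
    have hbound : ∀ i, |(N : ℝ) * tt i - u i| ≤ (N : ℝ) * (M + 1) := by
      intro i
      have h2 : tt i = (c i : ℝ) + (k i : ℝ) := by rw [htt]; push_cast; ring
      have h3 : |(N : ℝ) * tt i - u i| ≤ |(N : ℝ) * (c i : ℝ) - u i| + (N : ℝ) * (k i : ℝ) := by
        rw [h2, mul_add]
        calc |(N : ℝ) * c i + (N : ℝ) * k i - u i|
            = |((N : ℝ) * c i - u i) + (N : ℝ) * k i| := by ring_nf
          _ ≤ |(N : ℝ) * c i - u i| + |(N : ℝ) * (k i : ℝ)| := abs_add_le _ _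
          _ = |(N : ℝ) * c i - u i| + (N : ℝ) * (k i : ℝ) := by
              rw [abs_mul, Nat.abs_cast, Nat.abs_cast]
      have h4 : (k i : ℝ) ≤ (M : ℝ) := by exact_mod_cast hk i
      have h5 := hub i
      nlinarith
    rw [dist_eq_norm, hdiff]
    calc ‖∑ i, ((N : ℝ) * tt i - u i) • B i‖
        ≤ ∑ i, ‖((N : ℝ) * tt i - u i) • B i‖ := norm_sum_le _ _
      _ ≤ ∑ i, (N : ℝ) * (M + 1) * ‖B i‖ := by
          refine Finset.sum_le_sum fun i _ => ?_
          rw [norm_smul, Real.norm_eq_abs]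
          exact mul_le_mul_of_nonneg_right (hbound i) (norm_nonneg _)
      _ = (N : ℝ) * (M + 1) * (∑ i, ‖B i‖) := by rw [Finset.mul_sum]
      _ < R₀ := by rw [hR₀]; linarith
  have hzero : ∀ k : Fin n → ℕ, (∀ i, k i ≤ M) →
      MvPolynomial.eval (fun i => ((c i + (k i : ℤ) : ℤ) : ℂ)) P = 0 := by
    intro k hk
    set t : Fin n → ℝ := fun i => ((c i + (k i : ℤ) : ℤ) : ℝ) with htdef
    have h1 : p (lam + L t) = MvPolynomial.eval (fun i => ((t i : ℝ) : ℂ)) P := hP t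
    have h2 : lam + L t ∈ Λ := Submodule.add_mem _ hlam (hΞle (hmem _))
    have h3 : f (lam + L t) = p (lam + L t) := hp _ (hmem _)
    have h4 : f (lam + L t) = 0 := hx _ h2 (hdist k hk)
    have h6 : MvPolynomial.eval (fun i => ((t i : ℝ) : ℂ)) P = 0 := by rw [← h1, ← h3, h4]
    have h7 : (fun i => ((t i : ℝ) : ℂ)) = fun i => ((c i + (k i : ℤ) : ℤ) : ℂ) := by
      funext i; rw [htdef]; push_cast; ring
    rw [← h7]; exact h6
  have hPz : P = 0 := by
    apply mv_grid_zero P (fun i => (Finset.range (M + 1)).image fun j : ℕ => ((c i + (j : ℤ) : ℤ) : ℂ))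
    · intro i
      have hinj : Function.Injective (fun j : ℕ => ((c i + (j : ℤ) : ℤ) : ℂ)) := by
        intro a b hab
        simp only at hab
        have h8 := Int.cast_injective (α := ℂ) hab
        omega
      rw [Finset.card_image_of_injective _ hinj, Finset.card_range]
      exact Nat.lt_succ_self M
    · intro x hxS
      choose j hj hj2 using fun i => Finset.mem_image.mp (hxS i)
      have hxeq : x = fun i => ((c i + (j i : ℤ) : ℤ) : ℂ) := by funext i; rw [← hj2 i]
      rw [hxeq]
      exact hzero j (fun i => Nat.lt_succ_iff.mp (Finset.mem_range.mp (hj i)))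
  have h5 : f lam = p lam := by
    have := hp 0 (Submodule.zero_mem _); simpa using this
  have h6 : p lam = 0 := by
    have := hP 0
    rw [map_zero L, add_zero] at this
    rw [this, hPz, map_zero]
  rw [h5, h6]

/-- the summand appearing in `theta`. -/
def tTerm (Y v : V) (m : ℕ) : V :=
  if (0 : ℝ) < (inner ℝ v Y : ℝ) then ((m : ℤ) • v) else (-(((m : ℤ) + 1) • v))

lemma theta_eq (Φ : List V) (Y : V) (lam : V) :
    theta Φ Y lam = (-1 : ℤ) ^ (filterP Φ (fun φ => (inner ℝ φ Y : ℝ) < 0)).length *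
      (Set.ncard {n : Fin Φ.length → ℕ |
        ∑ i : Fin Φ.length, tTerm Y (Φ.get i) (n i) = lam} : ℤ) := rfl

lemma tTerm_inner_ge {Y v : V} (hv : (inner ℝ v Y : ℝ) ≠ 0) {m : ℝ} (hm : 0 < m)
    (hmle : m ≤ |(inner ℝ v Y : ℝ)|) (k : ℕ) :
    (k : ℝ) * m ≤ (inner ℝ (tTerm Y v k) Y : ℝ) := by
  unfold tTerm
  split_ifs with hpos
  · rw [← Int.cast_smul_eq_zsmul ℝ, real_inner_smul_left]
    push_cast
    have : m ≤ (inner ℝ v Y : ℝ) := by rwa [abs_of_pos hpos] at hmle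
    nlinarith [Nat.cast_nonneg (α := ℝ) k]
  · have hneg : (inner ℝ v Y : ℝ) < 0 := lt_of_le_of_ne (not_lt.mp hpos) hv
    rw [inner_neg_left, ← Int.cast_smul_eq_zsmul ℝ, real_inner_smul_left]
    push_cast
    have : m ≤ -(inner ℝ v Y : ℝ) := by rwa [abs_of_neg hneg] at hmle
    nlinarith [Nat.cast_nonneg (α := ℝ) k]

lemma tSet_finite (Φ : List V) (Y : V) (hY : Polarizing Φ Y) (lam : V) :
    {n : Fin Φ.length → ℕ | ∑ i : Fin Φ.length, tTerm Y (Φ.get i) (n i) = lam}.Finite := by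
  by_cases hΦ : Φ.length = 0
  · haveI : IsEmpty (Fin Φ.length) := ⟨fun i => absurd i.2 (by omega)⟩
    exact Set.Subsingleton.finite fun a _ b _ => funext fun i => isEmptyElim i
  · have hne : (Finset.univ : Finset (Fin Φ.length)).Nonempty := by
      refine ⟨⟨0, Nat.pos_of_ne_zero hΦ⟩, Finset.mem_univ _⟩
    set m : ℝ := Finset.univ.inf' hne fun i => |(inner ℝ (Φ.get i) Y : ℝ)| with hmdef
    have hm : 0 < m := by
      rw [hmdef, Finset.lt_inf'_iff]
      exact fun i _ => abs_pos.mpr (hY _ (List.get_mem Φ i))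
    set C : ℝ := (inner ℝ lam Y : ℝ) with hC
    have hbound : ∀ n ∈ {n : Fin Φ.length → ℕ |
        ∑ i : Fin Φ.length, tTerm Y (Φ.get i) (n i) = lam}, ∀ j, n j ≤ ⌈C / m⌉₊ := by
      intro n hn j
      have hsum : ∑ i, (inner ℝ (tTerm Y (Φ.get i) (n i)) Y : ℝ) = C := by
        rw [← sum_inner, hn]
      have hterm : ∀ i, (n i : ℝ) * m ≤ (inner ℝ (tTerm Y (Φ.get i) (n i)) Y : ℝ) := fun i =>
        tTerm_inner_ge (hY _ (List.get_mem Φ i)) hm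
          (Finset.inf'_le _ (Finset.mem_univ i)) (n i)
      have hterm0 : ∀ i, (0 : ℝ) ≤ (inner ℝ (tTerm Y (Φ.get i) (n i)) Y : ℝ) := fun i =>
        le_trans (by positivity) (hterm i)
      have hj : (n j : ℝ) * m ≤ C := by
        rw [← hsum]
        exact le_trans (hterm j)
          (Finset.single_le_sum (fun i _ => hterm0 i) (Finset.mem_univ j))
      have hj2 : (n j : ℝ) ≤ C / m := (le_div_iff₀ hm).mpr hj
      have hj3 : (n j : ℝ) ≤ (⌈C / m⌉₊ : ℝ) := le_trans hj2 (Nat.le_ceil _)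
      exact_mod_cast hj3
    refine Set.Finite.subset (Set.Finite.pi (fun _ : Fin Φ.length => Set.finite_Iic ⌈C / m⌉₊)) ?_
    intro n hn
    exact fun j _ => hbound n hn j

lemma perm_get_equiv {α : Type*} {l₁ l₂ : List α} (h : l₁.Perm l₂) :
    ∃ σ : Fin l₁.length ≃ Fin l₂.length, ∀ i, l₂.get (σ i) = l₁.get i := by
  induction h with
  | nil => exact ⟨Equiv.refl _, fun i => (Nat.not_lt_zero _ i.2).elim⟩
  | cons x h ih =>
    obtain ⟨σ, hσ⟩ := ih
    refine ⟨(finSuccEquiv _).trans ((σ.optionCongr).trans (finSuccEquiv _).symm), fun i => ?_⟩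
    refine Fin.cases ?_ (fun j => ?_) i
    · simp
    · have h0 := hσ j
      simp only [List.get_eq_getElem] at h0
      simp [h0]
  | swap x y l =>
    refine ⟨Equiv.swap ⟨0, by simp⟩ ⟨1, by simp⟩, fun i => ?_⟩
    obtain ⟨k, hk⟩ := i
    rcases k with _ | _ | k
    · simp [Equiv.swap_apply_def, Fin.ext_iff]
    · simp [Equiv.swap_apply_def, Fin.ext_iff]
    · simp [Equiv.swap_apply_def, Fin.ext_iff]
  | trans h₁ h₂ ih₁ ih₂ =>
    obtain ⟨σ₁, hσ₁⟩ := ih₁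
    obtain ⟨σ₂, hσ₂⟩ := ih₂
    refine ⟨σ₁.trans σ₂, fun i => ?_⟩
    have e1 := hσ₂ (σ₁ i)
    have e2 := hσ₁ i
    simp only [List.get_eq_getElem] at e1 e2
    simp [e1, e2]

lemma theta_perm {Φ₁ Φ₂ : List V} (h : Φ₁.Perm Φ₂) (Y lam : V) :
    theta Φ₁ Y lam = theta Φ₂ Y lam := by
  obtain ⟨σ, hσ⟩ := perm_get_equiv h
  rw [theta_eq, theta_eq]
  have hlen : (filterP Φ₁ (fun φ => (inner ℝ φ Y : ℝ) < 0)).length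
      = (filterP Φ₂ (fun φ => (inner ℝ φ Y : ℝ) < 0)).length :=
    (h.filter _).length_eq
  rw [hlen]
  congr 2
  set E : (Fin Φ₁.length → ℕ) ≃ (Fin Φ₂.length → ℕ) :=
    Equiv.arrowCongr σ (Equiv.refl ℕ) with hE
  have himg : {n : Fin Φ₂.length → ℕ | ∑ i, tTerm Y (Φ₂.get i) (n i) = lam}
      = E '' {n : Fin Φ₁.length → ℕ | ∑ i, tTerm Y (Φ₁.get i) (n i) = lam} := by
    ext y
    rw [Set.mem_image]
    constructor
    · intro hy
      refine ⟨E.symm y, ?_, E.apply_symm_apply y⟩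
      have h1 : ∀ i, (E.symm y) i = y (σ i) := fun i => by simp [hE]
      simp only [Set.mem_setOf_eq]
      calc ∑ i, tTerm Y (Φ₁.get i) ((E.symm y) i)
          = ∑ i, tTerm Y (Φ₂.get (σ i)) (y (σ i)) := by
            refine Finset.sum_congr rfl fun i _ => by rw [h1, hσ]
        _ = ∑ j, tTerm Y (Φ₂.get j) (y j) := Fintype.sum_equiv σ _ _ (fun i => rfl)
        _ = lam := hy
    · rintro ⟨w, hw, rfl⟩
      have h1 : ∀ j, (E w) j = w (σ.symm j) := fun j => by simp [hE]
      simp only [Set.mem_setOf_eq]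
      calc ∑ j, tTerm Y (Φ₂.get j) ((E w) j)
          = ∑ j, tTerm Y (Φ₂.get j) (w (σ.symm j)) := by
            refine Finset.sum_congr rfl fun j _ => by rw [h1]
        _ = ∑ i, tTerm Y (Φ₂.get (σ i)) (w i) :=
            (Fintype.sum_equiv σ _ _ (fun i => by rw [σ.symm_apply_apply])).symm
        _ = ∑ i, tTerm Y (Φ₁.get i) (w i) := by
            refine Finset.sum_congr rfl fun i _ => by rw [hσ]
        _ = lam := hw
  rw [himg, Set.ncard_image_of_injective _ E.injective]

lemma tTerm_succ (Y φ₀ : V) (m : ℕ) :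
    tTerm Y φ₀ (m + 1)
      = tTerm Y φ₀ m + (if (0 : ℝ) < (inner ℝ φ₀ Y : ℝ) then φ₀ else -φ₀) := by
  unfold tTerm
  split_ifs with h
  · push_cast
    rw [add_smul, one_smul]
  · push_cast
    rw [show ((m : ℤ) + 1 + 1) = ((m : ℤ) + 1) + 1 by ring, add_smul, one_smul, neg_add]

lemma ncard_split_gen (m : ℕ) (g : Fin (m + 1) → V) (Y : V)
    (hfin : ∀ ν : V, {n : Fin (m + 1) → ℕ | ∑ i, tTerm Y (g i) (n i) = ν}.Finite) (μ : V) :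
    (({n : Fin (m + 1) → ℕ | ∑ i, tTerm Y (g i) (n i) = μ}.ncard : ℤ))
    = ({w : Fin m → ℕ |
        ∑ j, tTerm Y (g (Fin.succ j)) (w j) = μ - tTerm Y (g 0) 0}.ncard : ℤ)
    + ({n : Fin (m + 1) → ℕ | ∑ i, tTerm Y (g i) (n i)
          = μ - (if (0 : ℝ) < (inner ℝ (g 0) Y : ℝ) then g 0 else -(g 0))}.ncard : ℤ) := by
  classical
  set d : V := if (0 : ℝ) < (inner ℝ (g 0) Y : ℝ) then g 0 else -(g 0) with hd
  set A : V → Set (Fin (m + 1) → ℕ) := fun ν =>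
    {n | ∑ i, tTerm Y (g i) (n i) = ν} with hA
  set Bs : Set (Fin m → ℕ) :=
    {w | ∑ j, tTerm Y (g (Fin.succ j)) (w j) = μ - tTerm Y (g 0) 0} with hBs
  have hmemA : ∀ (ν : V) (n), n ∈ A ν ↔
      tTerm Y (g 0) (n 0) + ∑ j, tTerm Y (g (Fin.succ j)) (n (Fin.succ j)) = ν := by
    intro ν n
    rw [hA]
    simp only [Set.mem_setOf_eq, Fin.sum_univ_succ]
  set T₀ : Set (Fin (m + 1) → ℕ) := {n ∈ A μ | n 0 = 0} with hT₀
  set T₁ : Set (Fin (m + 1) → ℕ) := {n ∈ A μ | n 0 ≠ 0} with hT₁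
  have hsub₀ : T₀ ⊆ A μ := fun n hn => hn.1
  have hsub₁ : T₁ ⊆ A μ := fun n hn => hn.1
  have hsplit : A μ = T₀ ∪ T₁ := by
    ext n; by_cases h : n 0 = 0 <;> simp [hT₀, hT₁, h, hA]
  have hdisj : Disjoint T₀ T₁ := by
    rw [Set.disjoint_iff]
    rintro n ⟨⟨_, h0⟩, ⟨_, h1⟩⟩
    exact (h1 h0).elim
  have hcard : (A μ).ncard = T₀.ncard + T₁.ncard := by
    rw [hsplit]
    exact Set.ncard_union_eq hdisj ((hfin μ).subset hsub₀) ((hfin μ).subset hsub₁)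
  -- first bijection
  have h1 : Bs = (fun n : Fin (m + 1) → ℕ => n ∘ Fin.succ) '' T₀ := by
    ext w
    constructor
    · intro hw
      have hw' : ∑ j, tTerm Y (g (Fin.succ j)) (w j) = μ - tTerm Y (g 0) 0 := hw
      refine ⟨Fin.cons 0 w, ⟨?_, by simp⟩, ?_⟩
      · rw [hmemA]
        simp only [Fin.cons_succ, Fin.cons_zero]
        rw [hw']
        abel
      · funext j; simp
    · rintro ⟨n, ⟨hnA, hn0⟩, rfl⟩
      have h2 := (hmemA μ n).mp hnA
      rw [hn0] at h2
      show ∑ j, tTerm Y (g (Fin.succ j)) (n (Fin.succ j)) = μ - tTerm Y (g 0) 0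
      rw [← h2]
      abel
  have hinj0 : Set.InjOn (fun n : Fin (m + 1) → ℕ => n ∘ Fin.succ) T₀ := by
    rintro n ⟨_, h0⟩ n' ⟨_, h0'⟩ h
    funext i
    refine Fin.cases ?_ (fun j => ?_) i
    · rw [h0, h0']
    · exact congrFun h j
  have hc0 : Bs.ncard = T₀.ncard := by rw [h1, Set.ncard_image_of_injOn hinj0]
  -- second bijection
  have h2 : A (μ - d) = (fun n : Fin (m + 1) → ℕ =>
      Function.update n 0 (n 0 - 1)) '' T₁ := by
    ext w
    constructor
    · intro hw
      have hw' := (hmemA _ w).mp hw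
      refine ⟨Function.update w 0 (w 0 + 1), ⟨?_, by simp⟩, ?_⟩
      · rw [hmemA]
        have hsucc : ∀ j : Fin m,
            Function.update w 0 (w 0 + 1) (Fin.succ j) = w (Fin.succ j) :=
          fun j => Function.update_of_ne (Fin.succ_ne_zero j) _ _
        rw [Function.update_self, Finset.sum_congr rfl fun j _ => by rw [hsucc], tTerm_succ]
        rw [← hd]
        calc tTerm Y (g 0) (w 0) + d + ∑ j, tTerm Y (g (Fin.succ j)) (w (Fin.succ j))
            = (tTerm Y (g 0) (w 0) + ∑ j, tTerm Y (g (Fin.succ j)) (w (Fin.succ j))) + d := by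
              abel
          _ = (μ - d) + d := by rw [hw']
          _ = μ := by abel
      · funext i
        rcases eq_or_ne i 0 with rfl | hi
        · simp
        · simp [Function.update_of_ne hi]
    · rintro ⟨n, ⟨hnA, hn0⟩, rfl⟩
      rw [hmemA]
      beta_reduce
      have hsucc : ∀ j : Fin m,
          Function.update n 0 (n 0 - 1) (Fin.succ j) = n (Fin.succ j) :=
        fun j => Function.update_of_ne (Fin.succ_ne_zero j) _ _
      rw [Function.update_self, Finset.sum_congr rfl fun j _ => by rw [hsucc]]
      have hn' := (hmemA μ n).mp hnA
      have hrec : tTerm Y (g 0) (n 0) = tTerm Y (g 0) (n 0 - 1) + d := by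
        conv_lhs => rw [show n 0 = (n 0 - 1) + 1 from
          (Nat.succ_pred_eq_of_pos (Nat.pos_of_ne_zero hn0)).symm]
        rw [tTerm_succ, ← hd]
      rw [hrec] at hn'
      rw [eq_sub_iff_add_eq, ← hn']
      abel
  have hinj1 : Set.InjOn (fun n : Fin (m + 1) → ℕ =>
      Function.update n 0 (n 0 - 1)) T₁ := by
    rintro n ⟨_, h0⟩ n' ⟨_, h0'⟩ h
    funext i
    refine Fin.cases ?_ (fun j => ?_) i
    · have e0 := congrFun h 0
      simp only [Function.update_self] at e0
      omega
    · have ej := congrFun h (Fin.succ j)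
      simpa [Function.update_of_ne (Fin.succ_ne_zero j)] using ej
  have hc1 : (A (μ - d)).ncard = T₁.ncard := by rw [h2, Set.ncard_image_of_injOn hinj1]
  have hfinal : (A μ).ncard = Bs.ncard + (A (μ - d)).ncard := by rw [hcard, hc0, hc1]
  simp only [hA, hBs] at hfinal
  exact_mod_cast hfinal

lemma theta_sub (Φ' : List V) (φ₀ Y : V) (hY : Polarizing (φ₀ :: Φ') Y) (lam : V) :
    theta (φ₀ :: Φ') Y lam - theta (φ₀ :: Φ') Y (lam - φ₀) = theta Φ' Y lam := by
  classical
  have hfilter : (filterP (φ₀ :: Φ') (fun φ => (inner ℝ φ Y : ℝ) < 0)).length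
      = (if (inner ℝ φ₀ Y : ℝ) < 0 then 1 else 0)
        + (filterP Φ' (fun φ => (inner ℝ φ Y : ℝ) < 0)).length := by
    unfold filterP
    rw [List.filter_cons]
    by_cases h : (inner ℝ φ₀ Y : ℝ) < 0
    · simp [h]
      omega
    · simp [h]
  have hfin : ∀ ν : V, {n : Fin (Φ'.length + 1) → ℕ |
      ∑ i, tTerm Y ((φ₀ :: Φ').get i) (n i) = ν}.Finite := fun ν => tSet_finite _ Y hY ν
  have ht0 : tTerm Y φ₀ 0 = if (0 : ℝ) < (inner ℝ φ₀ Y : ℝ) then 0 else -φ₀ := by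
    unfold tTerm
    split_ifs with h
    · simp
    · simp
  by_cases hpos : (0 : ℝ) < (inner ℝ φ₀ Y : ℝ)
  · have hnneg : ¬((inner ℝ φ₀ Y : ℝ) < 0) := by linarith
    have hkey : (({n : Fin (φ₀ :: Φ').length → ℕ |
          ∑ i, tTerm Y ((φ₀ :: Φ').get i) (n i) = lam}.ncard : ℤ))
        = ({w : Fin Φ'.length → ℕ |
            ∑ j, tTerm Y (Φ'.get j) (w j) = lam - tTerm Y φ₀ 0}.ncard : ℤ)
        + ({n : Fin (φ₀ :: Φ').length → ℕ | ∑ i, tTerm Y ((φ₀ :: Φ').get i) (n i)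
              = lam - (if (0 : ℝ) < (inner ℝ φ₀ Y : ℝ) then φ₀ else -φ₀)}.ncard : ℤ) :=
      ncard_split_gen Φ'.length ((φ₀ :: Φ').get) Y hfin lam
    rw [ht0, if_pos hpos, if_pos hpos, sub_zero] at hkey
    rw [theta_eq, theta_eq, theta_eq, hfilter, if_neg hnneg, zero_add, hkey]
    ring
  · have hneg : (inner ℝ φ₀ Y : ℝ) < 0 :=
      lt_of_le_of_ne (not_lt.mp hpos) (hY φ₀ (List.mem_cons_self))
    have hkey : (({n : Fin (φ₀ :: Φ').length → ℕ |
          ∑ i, tTerm Y ((φ₀ :: Φ').get i) (n i) = lam - φ₀}.ncard : ℤ))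
        = ({w : Fin Φ'.length → ℕ |
            ∑ j, tTerm Y (Φ'.get j) (w j) = lam - φ₀ - tTerm Y φ₀ 0}.ncard : ℤ)
        + ({n : Fin (φ₀ :: Φ').length → ℕ | ∑ i, tTerm Y ((φ₀ :: Φ').get i) (n i)
              = lam - φ₀ - (if (0 : ℝ) < (inner ℝ φ₀ Y : ℝ) then φ₀ else -φ₀)}.ncard : ℤ) :=
      ncard_split_gen Φ'.length ((φ₀ :: Φ').get) Y hfin (lam - φ₀)
    rw [ht0, if_neg hpos, if_neg hpos] at hkey
    rw [show lam - φ₀ - -φ₀ = lam from by abel] at hkey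
    rw [theta_eq, theta_eq, theta_eq, hfilter, if_pos hneg, hkey, pow_add]
    ring

lemma theta_zero_of_not_mem_span (Φ' : List V) (Y lam : V)
    (h : lam ∉ Submodule.span ℝ {v | v ∈ Φ'}) : theta Φ' Y lam = 0 := by
  rw [theta_eq]
  have hempty : {n : Fin Φ'.length → ℕ |
      ∑ i, tTerm Y (Φ'.get i) (n i) = lam} = ∅ := by
    rw [Set.eq_empty_iff_forall_notMem]
    intro n hn
    apply h
    rw [← hn]
    refine Submodule.sum_mem _ fun i _ => ?_
    have hv : Φ'.get i ∈ Submodule.span ℝ {v | v ∈ Φ'} :=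
      Submodule.subset_span (List.get_mem Φ' i)
    unfold tTerm
    split_ifs with hc
    · rw [← Int.cast_smul_eq_zsmul ℝ]
      exact Submodule.smul_mem _ _ hv
    · refine Submodule.neg_mem _ ?_
      rw [← Int.cast_smul_eq_zsmul ℝ]
      exact Submodule.smul_mem _ _ hv
  rw [hempty]
  simp

lemma regular_open (Φ : List V) (hspan : Submodule.span ℝ {v | v ∈ Φ} = ⊤) :
    IsOpen {x : V | PhiRegular Φ x} := by
  classical
  set F : Set (Finset V) := {s : Finset V | ↑s ⊆ {v : V | v ∈ Φ} ∧
    s.card < finrank ℝ (Submodule.span ℝ {v : V | v ∈ Φ})} with hF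
  have hFfin : F.Finite := by
    refine Set.Finite.subset (Φ.toFinset.powerset : Finset (Finset V)).finite_toSet ?_
    intro s hs
    rw [Finset.mem_coe, Finset.mem_powerset]
    intro v hv
    have := hs.1 hv
    rwa [List.mem_toFinset]
  have hreg : {x : V | PhiRegular Φ x}
      = (⋃ s ∈ F, ((Submodule.span ℝ ((s : Finset V) : Set V) : Submodule ℝ V) : Set V))ᶜ := by
    ext x
    constructor
    · intro hx hc
      rw [Set.mem_iUnion₂] at hc
      obtain ⟨s, hsF, hxs⟩ := hc
      exact hx.2 ⟨s, hsF.1, hsF.2, hxs⟩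
    · intro hx
      refine ⟨by rw [hspan]; trivial, ?_⟩
      rintro ⟨s, h1, h2, h3⟩
      exact hx (Set.mem_iUnion₂.mpr ⟨s, ⟨h1, h2⟩, h3⟩)
  rw [hreg]
  exact (Set.Finite.isClosed_biUnion hFfin fun s _ =>
    (Submodule.span ℝ ((s : Finset V) : Set V)).closed_of_finiteDimensional).isOpen_compl

lemma PhiRegular.smul' {Φ : List V} {x : V} (h : PhiRegular Φ x) {c : ℝ} (hc : c ≠ 0) :
    PhiRegular Φ (c • x) := by
  obtain ⟨h1, h2⟩ := h
  refine ⟨Submodule.smul_mem _ _ h1, ?_⟩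
  rintro ⟨s, hs1, hs2, hs3⟩
  refine h2 ⟨s, hs1, hs2, ?_⟩
  have := Submodule.smul_mem _ c⁻¹ hs3
  rwa [inv_smul_smul₀ hc] at this

lemma tope_smul_mem {Φ : List V} {T : Set V} (hT : IsTope Φ T)
    {x : V} (hx : x ∈ T) {t : ℝ} (ht : 1 ≤ t) : t • x ∈ T := by
  obtain ⟨γ, hγ, rfl⟩ := hT
  have hxR : x ∈ {y : V | PhiRegular Φ y} := connectedComponentIn_subset _ _ hx
  set K : Set V := (fun r : ℝ => r • x) '' Set.Icc 1 t with hK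
  have hKconn : IsPreconnected K :=
    (isPreconnected_Icc).image _ (Continuous.continuousOn (by continuity))
  have hKsub : K ⊆ {y : V | PhiRegular Φ y} := by
    rintro y ⟨r, hr, rfl⟩
    have hr0 : r ≠ 0 := by have := hr.1; intro h0; rw [h0] at this; linarith
    exact PhiRegular.smul' hxR hr0
  have hxK : x ∈ K := ⟨1, ⟨le_refl 1, ht⟩, one_smul ℝ x⟩
  have hsub := hKconn.subset_connectedComponentIn hxK hKsub
  rw [connectedComponentIn_eq hx]
  exact hsub ⟨t, ⟨ht, le_refl t⟩, rfl⟩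

lemma tope_large_balls {Φ : List V} (hspan : Submodule.span ℝ {v | v ∈ Φ} = ⊤)
    {T : Set V} (hT : IsTope Φ T) (R : ℝ) (w : V) :
    ∃ x : V, ∀ v : V, dist v x < R → (v ∈ T ∧ v - w ∈ T) := by
  obtain ⟨γ, hγ, hTe⟩ := hT
  have hopen : IsOpen T := by
    rw [hTe]; exact (regular_open Φ hspan).connectedComponentIn
  have hγT : γ ∈ T := by
    rw [hTe]; exact mem_connectedComponentIn hγ
  obtain ⟨ε, hε, hball⟩ := Metric.isOpen_iff.mp hopen γ hγT
  obtain ⟨t, ht1, ht2⟩ : ∃ t : ℝ, 1 ≤ t ∧ R + ‖w‖ + 1 < t * ε := by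
    refine ⟨max 1 ((R + ‖w‖ + 2) / ε), le_max_left _ _, ?_⟩
    have h1 : (R + ‖w‖ + 2) / ε ≤ max 1 ((R + ‖w‖ + 2) / ε) := le_max_right _ _
    have h2 := mul_le_mul_of_nonneg_right h1 (le_of_lt hε)
    rw [div_mul_cancel₀ _ (ne_of_gt hε)] at h2
    linarith
  have htpos : (0 : ℝ) < t := lt_of_lt_of_le one_pos ht1
  have hmemT : ∀ u : V, dist u (t • γ) < t * ε → u ∈ T := by
    intro u hu
    have h2 : t⁻¹ • u ∈ Metric.ball γ ε := by
      rw [Metric.mem_ball]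
      have h3 : dist (t⁻¹ • u) γ = |t⁻¹| * dist u (t • γ) := by
        conv_lhs => rw [show γ = t⁻¹ • (t • γ) from (inv_smul_smul₀ (ne_of_gt htpos) γ).symm]
        rw [dist_smul₀, Real.norm_eq_abs]
      rw [h3, abs_of_pos (inv_pos.mpr htpos)]
      rw [inv_mul_lt_iff₀ htpos]
      exact hu
    have h4 := tope_smul_mem ⟨γ, hγ, hTe⟩ (hball h2) ht1
    rwa [smul_inv_smul₀ (ne_of_gt htpos)] at h4
  refine ⟨t • γ, fun v hv => ?_⟩
  have hw0 : (0 : ℝ) ≤ ‖w‖ := norm_nonneg w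
  constructor
  · exact hmemT v (by linarith)
  · apply hmemT
    calc dist (v - w) (t • γ) ≤ dist (v - w) v + dist v (t • γ) := dist_triangle _ _ _
      _ = ‖w‖ + dist v (t • γ) := by
          rw [dist_eq_norm, sub_sub_cancel_left, norm_neg]
      _ < t * ε := by linarith

lemma not_mem_span_of_regular {Φ Φ' : List V} (hsub : ∀ v, v ∈ Φ' → v ∈ Φ)
    (hspan : Submodule.span ℝ {v : V | v ∈ Φ} = ⊤)
    (hns : Submodule.span ℝ {v : V | v ∈ Φ'} ≠ ⊤) {lam : V} (hreg : PhiRegular Φ lam) :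
    lam ∉ Submodule.span ℝ {v : V | v ∈ Φ'} := by
  intro hmem
  obtain ⟨b, hb1, hb2, hb3⟩ := exists_linearIndependent ℝ {v : V | v ∈ Φ'}
  have hbfin : b.Finite := hb3.setFinite
  haveI := hbfin.fintype
  have hcard : hbfin.toFinset.card = finrank ℝ (Submodule.span ℝ b) := by
    rw [finrank_span_set_eq_card hb3]
    congr 1
    ext v
    simp
  have hlt : finrank ℝ (Submodule.span ℝ b) < finrank ℝ V := by
    rw [hb2]
    exact Submodule.finrank_lt hns
  refine hreg.2 ⟨hbfin.toFinset, ?_, ?_, ?_⟩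
  · intro v hv
    rw [Finset.mem_coe, Set.Finite.mem_toFinset] at hv
    exact hsub v (hb1 hv)
  · rw [hcard, hspan, finrank_top]
    exact hlt
  · rw [show ((hbfin.toFinset : Finset V) : Set V) = b from hbfin.coe_toFinset, hb2]
    exact hmem

/-- Wall-crossing of the Dahmen–Micchelli quasi-polynomials: if `q` agrees with `Θ[Φ↑Y]` on the
tope `T` and `Φ' = Φ - {φ₀}`, then (i) if `Φ'` spans `V` and `q'` agrees with `Θ[Φ'↑Y]` on the
`Φ'`-tope `T'` containing `T`, then `q(λ) - q(λ - φ₀) = q'(λ)` on `Λ`; and (ii) if `Φ'` does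
not span `V`, then `q(λ) - q(λ - φ₀) = 0` on `Λ`. -/
theorem quasiPoly_difference_eq
    (Λ : Submodule ℤ V) (hΛ : IsLattice Λ)
    (Φ Φ' : List V) (φ₀ : V) (hperm : Φ.Perm (φ₀ :: Φ'))
    (hΦ0 : ∀ φ ∈ Φ, φ ≠ 0) (hΦΛ : ∀ φ ∈ Φ, φ ∈ Λ)
    (hspan : Submodule.span ℝ {v | v ∈ Φ} = ⊤)
    (Y : V) (hY : Polarizing Φ Y)
    (T : Set V) (hT : IsTope Φ T)
    (q : V → ℂ) (hq : IsQuasiPoly Λ q)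
    (hqT : ∀ lam ∈ (Λ : Set V) ∩ T, q lam = (theta Φ Y lam : ℂ)) :
    (Submodule.span ℝ {v | v ∈ Φ'} = ⊤ →
      ∀ T' : Set V, IsTope Φ' T' → T ⊆ T' →
        ∀ q' : V → ℂ, IsQuasiPoly Λ q' →
          (∀ lam ∈ (Λ : Set V) ∩ T', q' lam = (theta Φ' Y lam : ℂ)) →
          ∀ lam ∈ Λ, q lam - q (lam - φ₀) = q' lam) ∧
    (Submodule.span ℝ {v | v ∈ Φ'} ≠ ⊤ →
      ∀ lam ∈ Λ, q lam - q (lam - φ₀) = 0) := by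
  classical
  have hφ₀Φ : φ₀ ∈ Φ := hperm.mem_iff.mpr (List.mem_cons_self)
  have hφ₀Λ : φ₀ ∈ Λ := hΦΛ φ₀ hφ₀Φ
  have hY' : Polarizing (φ₀ :: Φ') Y := fun φ hφ => hY φ (hperm.mem_iff.mpr hφ)
  have hrec : ∀ lam : V, theta Φ Y lam - theta Φ Y (lam - φ₀) = theta Φ' Y lam := by
    intro lam
    rw [theta_perm hperm Y lam, theta_perm hperm Y (lam - φ₀)]
    exact theta_sub Φ' φ₀ Y hY' lam
  have hTsub : T ⊆ {x : V | PhiRegular Φ x} := by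
    obtain ⟨γ, hγ, hTe⟩ := hT
    rw [hTe]
    exact connectedComponentIn_subset _ _
  constructor
  · intro hspan' T' hT' hTT' q' hq' hq'T'
    set f : V → ℂ := fun v => (q v - q (v - φ₀)) - q' v with hf
    have hfq : IsQuasiPoly Λ f := (hq.sub' (hq.translate' hφ₀Λ)).sub' hq'
    have hvanish : ∀ v ∈ Λ, f v = 0 := by
      apply quasi_vanish Λ hΛ f hfq
      intro R
      obtain ⟨x, hx⟩ := tope_large_balls hspan hT R φ₀
      refine ⟨x, fun v hv hd => ?_⟩
      obtain ⟨hvT, hvT'⟩ := hx v hd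
      have h1 : q v = (theta Φ Y v : ℂ) := hqT v ⟨hv, hvT⟩
      have h2 : q (v - φ₀) = (theta Φ Y (v - φ₀) : ℂ) :=
        hqT (v - φ₀) ⟨Submodule.sub_mem _ hv hφ₀Λ, hvT'⟩
      have h3 : q' v = (theta Φ' Y v : ℂ) := hq'T' v ⟨hv, hTT' hvT⟩
      have hz : (theta Φ Y v - theta Φ Y (v - φ₀)) - theta Φ' Y v = 0 := by
        rw [hrec v]; ring
      simp only [hf]
      rw [h1, h2, h3]
      exact_mod_cast hz
    intro lam hlam
    have := hvanish lam hlam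
    simp only [hf] at this
    have h4 : q lam - q (lam - φ₀) - q' lam = 0 := this
    linear_combination h4
  · intro hspan' lam hlam
    set f : V → ℂ := fun v => q v - q (v - φ₀) with hf
    have hfq : IsQuasiPoly Λ f := hq.sub' (hq.translate' hφ₀Λ)
    have hsubΦ : ∀ v, v ∈ Φ' → v ∈ Φ := fun v hv =>
      hperm.mem_iff.mpr (List.mem_cons_of_mem _ hv)
    have hvanish : ∀ v ∈ Λ, f v = 0 := by
      apply quasi_vanish Λ hΛ f hfq
      intro R
      obtain ⟨x, hx⟩ := tope_large_balls hspan hT R φ₀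
      refine ⟨x, fun v hv hd => ?_⟩
      obtain ⟨hvT, hvT'⟩ := hx v hd
      have h1 : q v = (theta Φ Y v : ℂ) := hqT v ⟨hv, hvT⟩
      have h2 : q (v - φ₀) = (theta Φ Y (v - φ₀) : ℂ) :=
        hqT (v - φ₀) ⟨Submodule.sub_mem _ hv hφ₀Λ, hvT'⟩
      have hregv : PhiRegular Φ v := hTsub hvT
      have h3 : theta Φ' Y v = 0 := theta_zero_of_not_mem_span Φ' Y v
        (not_mem_span_of_regular hsubΦ hspan hspan' hregv)
      have hz : theta Φ Y v - theta Φ Y (v - φ₀) = 0 := by rw [hrec v, h3]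
      simp only [hf]
      rw [h1, h2]
      exact_mod_cast hz
    exact hvanish lam hlam

end
end
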